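/- arXiv:1807.09084 — 2 statements merged into one kernel-verified Lean document; each statement's English description precedes it below -/
import Mathlib

section
/- Let 𝖠 ⊆ M_d(ℝ) be compact and nonempty with a multicone (K_1,…,K_m) and transverse-defining vector w. Then there exist constants τ_1, τ_2, τ_3 > 0 such that: (i) ‖Au‖ ≥ τ_1·‖A‖·‖u‖ for every u ∈ K_1 ∪ ⋯ ∪ K_m and every A ∈ 𝒮(𝖠); (ii) |⟨Au,w⟩| ≥ τ_2·‖A‖·‖u‖ for every u ∈ K_1 ∪ ⋯ ∪ K_m and every A ∈ 𝒮(𝖠); (iii) ‖A_1 A_2‖ ≥ τ_3·‖A_1‖·‖A_2‖ for every A_1, A_2 ∈ 𝒮(𝖠). -/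
open scoped BigOperators Pointwise

noncomputable section

/-- The Euclidean norm of a finitely-indexed vector (real or complex entries). -/
def eucNorm {ι : Type*} [Fintype ι] {E : Type*} [Norm E] (u : ι → E) : ℝ :=
  Real.sqrt (∑ i, ‖u i‖ ^ 2)

/-- The operator norm of a real matrix induced by the Euclidean norm. -/
def opNorm {ι : Type*} [Fintype ι] (A : Matrix ι ι ℝ) : ℝ :=
  sSup ((fun u : ι → ℝ => eucNorm (A.mulVec u)) '' {u : ι → ℝ | eucNorm u = 1})

/-- A multicone for a set of matrices (Definition 1.2). -/
def IsMulticone {ι : Type*} [Fintype ι] (S : Set (Matrix ι ι ℝ)) {m : ℕ}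
    (K : Fin m → Set (ι → ℝ)) (w : ι → ℝ) : Prop :=
  (∀ j, IsClosed (K j)) ∧ (∀ j, Convex ℝ (K j)) ∧ (∀ j, (interior (K j)).Nonempty) ∧
  (∀ j, ∀ c : ℝ, 0 ≤ c → ∀ u ∈ K j, c • u ∈ K j) ∧
  (∑ i, w i ^ 2 = 1) ∧
  (∀ u ∈ ⋃ j, K j, u ≠ 0 → 0 < ∑ i, u i * w i) ∧
  (∀ A ∈ S, ∀ j, ∃ ℓ, ∀ u ∈ K j, u ≠ 0 →
    A.mulVec u ∈ interior (K ℓ) ∨ -A.mulVec u ∈ interior (K ℓ)) ∧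
  (∀ j₁ j₂, j₁ ≠ j₂ → K j₁ ∩ K j₂ = {0})

/-- The set of matrices is multipositive if it admits a multicone. -/
def IsMultipositive {ι : Type*} [Fintype ι] (S : Set (Matrix ι ι ℝ)) : Prop :=
  ∃ (m : ℕ) (_ : 0 < m) (K : Fin m → Set (ι → ℝ)) (w : ι → ℝ), IsMulticone S K w

/-- The semigroup generated by a set of matrices. -/
def semigroupOf {ι : Type*} [Fintype ι] [DecidableEq ι] (S : Set (Matrix ι ι ℝ)) :
    Set (Matrix ι ι ℝ) :=
  {B | ∃ l : List (Matrix ι ι ℝ), l ≠ [] ∧ (∀ M ∈ l, M ∈ S) ∧ B = l.prod}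

/-- The complexification of a set in ℝ^ι. -/
def complexify {ι : Type*} (K : Set (ι → ℝ)) : Set (ι → ℂ) :=
  {z | ∃ (c : ℂ) (u v : ι → ℝ), u ∈ K ∧ v ∈ K ∧
    z = fun i => c * (((u i : ℂ) + (v i : ℂ)) + Complex.I * ((u i : ℂ) - (v i : ℂ)))}

/-- The action of a real matrix on complex vectors. -/
def mulVecC {ι : Type*} [Fintype ι] (A : Matrix ι ι ℝ) (z : ι → ℂ) : ι → ℂ :=
  (A.map (fun x : ℝ => (x : ℂ))).mulVec z

/-- An ℝ-cone: closed, convex, nonempty interior, positively homogeneous, proper. -/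
def IsRCone {ι : Type*} [Fintype ι] (K : Set (ι → ℝ)) : Prop :=
  IsClosed K ∧ Convex ℝ K ∧ (interior K).Nonempty ∧
  (∀ c : ℝ, 0 < c → c • K = K) ∧ K ∩ (-K) = {0}

end

noncomputable section
namespace Aux
variable {d : ℕ}

lemma enorm_eq_norm (u : Fin d → ℝ) :
    eucNorm u = ‖(WithLp.equiv 2 (Fin d → ℝ)).symm u‖ := by
  rw [EuclideanSpace.norm_eq]; rfl

lemma enorm_nonneg (u : Fin d → ℝ) : 0 ≤ eucNorm u := Real.sqrt_nonneg _

lemma enorm_zero : eucNorm (0 : Fin d → ℝ) = 0 := by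
  simp [eucNorm]

lemma enorm_eq_zero {u : Fin d → ℝ} : eucNorm u = 0 ↔ u = 0 := by
  rw [enorm_eq_norm, norm_eq_zero]
  constructor
  · intro h; have := congrArg (WithLp.equiv 2 (Fin d → ℝ)) h; simpa using this
  · rintro rfl; simp

lemma enorm_pos {u : Fin d → ℝ} (hu : u ≠ 0) : 0 < eucNorm u :=
  lt_of_le_of_ne (enorm_nonneg u) (fun h => hu (enorm_eq_zero.mp h.symm))

lemma enorm_smul (c : ℝ) (u : Fin d → ℝ) : eucNorm (c • u) = |c| * eucNorm u := by
  rw [enorm_eq_norm, enorm_eq_norm]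
  have : (WithLp.equiv 2 (Fin d → ℝ)).symm (c • u)
      = c • (WithLp.equiv 2 (Fin d → ℝ)).symm u := by simp
  rw [this, norm_smul, Real.norm_eq_abs]

lemma enorm_add_le (u v : Fin d → ℝ) : eucNorm (u + v) ≤ eucNorm u + eucNorm v := by
  rw [enorm_eq_norm, enorm_eq_norm, enorm_eq_norm]
  have : (WithLp.equiv 2 (Fin d → ℝ)).symm (u + v)
      = (WithLp.equiv 2 (Fin d → ℝ)).symm u + (WithLp.equiv 2 (Fin d → ℝ)).symm v := by simp
  rw [this]; exact norm_add_le _ _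

lemma enorm_neg (u : Fin d → ℝ) : eucNorm (-u) = eucNorm u := by
  have := enorm_smul (-1 : ℝ) u
  simpa using this

lemma enorm_sub_le (u v : Fin d → ℝ) : eucNorm (u - v) ≤ eucNorm u + eucNorm v := by
  have := enorm_add_le u (-v)
  simpa [sub_eq_add_neg, enorm_neg] using this

lemma abs_sum_mul_le (u v : Fin d → ℝ) : |∑ i, u i * v i| ≤ eucNorm u * eucNorm v := by
  have h := abs_real_inner_le_norm ((WithLp.equiv 2 (Fin d → ℝ)).symm u)
    ((WithLp.equiv 2 (Fin d → ℝ)).symm v)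
  rw [enorm_eq_norm, enorm_eq_norm]
  have h2 : (inner ℝ ((WithLp.equiv 2 (Fin d → ℝ)).symm u)
      ((WithLp.equiv 2 (Fin d → ℝ)).symm v) : ℝ) = ∑ i, u i * v i := by
    simp [PiLp.inner_apply, RCLike.inner_apply, mul_comm]
  rwa [h2] at h

lemma abs_apply_le_enorm (u : Fin d → ℝ) (i : Fin d) : |u i| ≤ eucNorm u := by
  have h1 : |u i| = Real.sqrt ((u i) ^ 2) := by
    rw [Real.sqrt_sq_eq_abs]
  rw [h1, eucNorm]
  apply Real.sqrt_le_sqrt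
  have := Finset.single_le_sum (f := fun i => ‖u i‖ ^ 2)
    (fun i _ => by positivity) (Finset.mem_univ i)
  simpa [Real.norm_eq_abs, sq_abs] using this

lemma continuous_enorm : Continuous (eucNorm : (Fin d → ℝ) → ℝ) := by
  unfold eucNorm
  exact Real.continuous_sqrt.comp (by fun_prop)

lemma continuous_sumw (w : Fin d → ℝ) : Continuous (fun u : Fin d → ℝ => ∑ i, u i * w i) := by
  fun_prop

lemma sumw_add (u v w : Fin d → ℝ) :
    ∑ i, (u + v) i * w i = (∑ i, u i * w i) + ∑ i, v i * w i := by
  simp [add_mul, Finset.sum_add_distrib]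

lemma sumw_smul (c : ℝ) (u w : Fin d → ℝ) :
    ∑ i, (c • u) i * w i = c * ∑ i, u i * w i := by
  simp [Finset.mul_sum, mul_assoc]

lemma sumw_zero (w : Fin d → ℝ) : ∑ i, (0 : Fin d → ℝ) i * w i = 0 := by simp

lemma sumw_neg (u w : Fin d → ℝ) : ∑ i, (-u) i * w i = -∑ i, u i * w i := by
  simp [Finset.sum_neg_distrib]

-- compactness of closed subsets of the sphere
lemma isCompact_sphere_inter (s : Set (Fin d → ℝ)) (hs : IsClosed s) :
    IsCompact (s ∩ {u : Fin d → ℝ | eucNorm u = 1}) := by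
  have hsub : s ∩ {u : Fin d → ℝ | eucNorm u = 1} ⊆ Metric.closedBall 0 1 := by
    rintro u ⟨-, hu⟩
    rw [Metric.mem_closedBall, dist_zero_right]
    rw [pi_norm_le_iff_of_nonneg (by norm_num)]
    intro i
    rw [Real.norm_eq_abs]
    calc |u i| ≤ eucNorm u := abs_apply_le_enorm u i
    _ = 1 := hu
  exact (isCompact_closedBall 0 1).of_isClosed_subset
    (hs.inter (isClosed_eq continuous_enorm continuous_const)) hsub

lemma continuous_mulVec_right (A : Matrix (Fin d) (Fin d) ℝ) :
    Continuous (A.mulVec) := by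
  unfold Matrix.mulVec dotProduct
  fun_prop

lemma continuous_mulVec_pair :
    Continuous (fun p : Matrix (Fin d) (Fin d) ℝ × (Fin d → ℝ) => p.1.mulVec p.2) := by
  unfold Matrix.mulVec dotProduct
  fun_prop

lemma isGreatest_opNorm (hne : ∃ u : Fin d → ℝ, eucNorm u = 1) (A : Matrix (Fin d) (Fin d) ℝ) :
    IsGreatest ((fun u : Fin d → ℝ => eucNorm (A.mulVec u)) '' {u : Fin d → ℝ | eucNorm u = 1})
      (opNorm A) := by
  have hcpt : IsCompact ({u : Fin d → ℝ | eucNorm u = 1}) := by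
    have := isCompact_sphere_inter (Set.univ : Set (Fin d → ℝ)) isClosed_univ
    simpa using this
  have hcont : Continuous fun u : Fin d → ℝ => eucNorm (A.mulVec u) :=
    continuous_enorm.comp (continuous_mulVec_right A)
  obtain ⟨x, hx, hmax⟩ := hcpt.exists_isMaxOn hne hcont.continuousOn
  have hG : IsGreatest ((fun u : Fin d → ℝ => eucNorm (A.mulVec u)) '' {u | eucNorm u = 1})
      (eucNorm (A.mulVec x)) := by
    constructor
    · exact ⟨x, hx, rfl⟩
    · rintro y ⟨z, hz, rfl⟩; exact hmax hz
  have : opNorm A = eucNorm (A.mulVec x) := hG.csSup_eq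
  rw [this]; exact hG

lemma opNorm_nonneg (hne : ∃ u : Fin d → ℝ, eucNorm u = 1) (A : Matrix (Fin d) (Fin d) ℝ) :
    0 ≤ opNorm A := by
  obtain ⟨⟨z, _, hz⟩, -⟩ := isGreatest_opNorm hne A
  rw [← hz]; exact enorm_nonneg _

lemma exists_opNorm_attained (hne : ∃ u : Fin d → ℝ, eucNorm u = 1)
    (A : Matrix (Fin d) (Fin d) ℝ) :
    ∃ x : Fin d → ℝ, eucNorm x = 1 ∧ eucNorm (A.mulVec x) = opNorm A := by
  obtain ⟨⟨z, hz1, hz2⟩, -⟩ := isGreatest_opNorm hne A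
  exact ⟨z, hz1, hz2⟩

lemma le_opNorm (hne : ∃ u : Fin d → ℝ, eucNorm u = 1) (A : Matrix (Fin d) (Fin d) ℝ)
    (u : Fin d → ℝ) : eucNorm (A.mulVec u) ≤ opNorm A * eucNorm u := by
  rcases eq_or_ne u 0 with rfl | hu
  · simp [Matrix.mulVec_zero, enorm_zero]
  · have hpos := enorm_pos hu
    have h1 : eucNorm ((eucNorm u)⁻¹ • u) = 1 := by
      rw [enorm_smul, abs_of_pos (by positivity)]
      field_simp
    have h2 : eucNorm (A.mulVec ((eucNorm u)⁻¹ • u)) ≤ opNorm A :=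
      (isGreatest_opNorm hne A).2 ⟨_, h1, rfl⟩
    rw [Matrix.mulVec_smul, enorm_smul, abs_of_pos (by positivity)] at h2
    calc eucNorm (A.mulVec u) = eucNorm u * ((eucNorm u)⁻¹ * eucNorm (A.mulVec u)) := by
          field_simp
    _ ≤ eucNorm u * opNorm A := by
          apply mul_le_mul_of_nonneg_left _ (le_of_lt hpos)
          simpa using h2
    _ = opNorm A * eucNorm u := mul_comm _ _

lemma opNorm_mul_le (hne : ∃ u : Fin d → ℝ, eucNorm u = 1) (A B : Matrix (Fin d) (Fin d) ℝ) :
    opNorm (A * B) ≤ opNorm A * opNorm B := by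
  obtain ⟨x, hx1, hx2⟩ := exists_opNorm_attained hne (A * B)
  rw [← hx2, ← Matrix.mulVec_mulVec]
  calc eucNorm (A.mulVec (B.mulVec x)) ≤ opNorm A * eucNorm (B.mulVec x) := le_opNorm hne A _
  _ ≤ opNorm A * (opNorm B * eucNorm x) :=
      mul_le_mul_of_nonneg_left (le_opNorm hne B x) (opNorm_nonneg hne A)
  _ = opNorm A * opNorm B := by rw [hx1, mul_one]

lemma enorm_mulVec_le_of_unit (hne : ∃ u : Fin d → ℝ, eucNorm u = 1)
    (A : Matrix (Fin d) (Fin d) ℝ) {u : Fin d → ℝ} (hu : eucNorm u = 1) :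
    eucNorm (A.mulVec u) ≤ opNorm A := by
  have := le_opNorm hne A u
  simpa [hu] using this

-- crude entrywise upper bound, for continuity/compactness purposes
lemma opNorm_le_crude (hne : ∃ u : Fin d → ℝ, eucNorm u = 1) (A : Matrix (Fin d) (Fin d) ℝ) :
    opNorm A ≤ Real.sqrt (∑ i, (∑ j, |A i j|) ^ 2) := by
  obtain ⟨x, hx1, hx2⟩ := exists_opNorm_attained hne A
  rw [← hx2, eucNorm]
  apply Real.sqrt_le_sqrt
  apply Finset.sum_le_sum
  intro i _
  rw [Real.norm_eq_abs]
  apply pow_le_pow_left₀ (abs_nonneg _)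
  calc |A.mulVec x i| = |∑ j, A i j * x j| := rfl
  _ ≤ ∑ j, |A i j * x j| := Finset.abs_sum_le_sum_abs _ _
  _ ≤ ∑ j, |A i j| * 1 := by
      apply Finset.sum_le_sum
      intro j _
      rw [abs_mul]
      apply mul_le_mul_of_nonneg_left _ (abs_nonneg _)
      calc |x j| ≤ eucNorm x := abs_apply_le_enorm x j
      _ = 1 := hx1
  _ = ∑ j, |A i j| := by simp

lemma continuous_crude :
    Continuous (fun A : Matrix (Fin d) (Fin d) ℝ => Real.sqrt (∑ i, (∑ j, |A i j|) ^ 2)) := by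
  apply Real.continuous_sqrt.comp
  fun_prop


variable {m : ℕ} {K : Fin m → Set (Fin d → ℝ)} {w : Fin d → ℝ}


lemma enorm_w (h5 : ∑ i, w i ^ 2 = 1) : eucNorm w = 1 := by
  have : eucNorm w = Real.sqrt (∑ i, w i ^ 2) := by
    unfold eucNorm; congr 1; apply Finset.sum_congr rfl; intro i _
    rw [Real.norm_eq_abs, sq_abs]
  rw [this, h5, Real.sqrt_one]

lemma w_ne_zero (h5 : ∑ i, w i ^ 2 = 1) : w ≠ 0 := by
  intro h
  rw [h] at h5
  simp at h5

lemma transv (h6 : ∀ u ∈ ⋃ j, K j, u ≠ 0 → 0 < ∑ i, u i * w i)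
    {j : Fin m} {u : Fin d → ℝ} (hu : u ∈ K j) (h0 : u ≠ 0) : 0 < ∑ i, u i * w i :=
  h6 u (Set.mem_iUnion.mpr ⟨j, hu⟩) h0

lemma transv' (h6 : ∀ u ∈ ⋃ j, K j, u ≠ 0 → 0 < ∑ i, u i * w i)
    {j : Fin m} {u : Fin d → ℝ} (hu : u ∈ K j) : 0 ≤ ∑ i, u i * w i := by
  rcases eq_or_ne u 0 with rfl | h0
  · simp
  · exact le_of_lt (transv h6 hu h0)

lemma pi_norm_le_enorm (v : Fin d → ℝ) : ‖v‖ ≤ eucNorm v := by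
  rw [pi_norm_le_iff_of_nonneg (enorm_nonneg v)]
  intro i
  rw [Real.norm_eq_abs]
  exact abs_apply_le_enorm v i

lemma interior_ball {s : Set (Fin d → ℝ)} {x : Fin d → ℝ} (hx : x ∈ interior s) :
    ∃ r > 0, ∀ z, eucNorm (z - x) ≤ r → z ∈ s := by
  have hnh : s ∈ nhds x := mem_interior_iff_mem_nhds.mp hx
  obtain ⟨ε, hε, hball⟩ := Metric.mem_nhds_iff.mp hnh
  refine ⟨ε / 2, by positivity, fun z hz => ?_⟩
  apply hball
  rw [Metric.mem_ball, dist_eq_norm]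
  calc ‖z - x‖ ≤ eucNorm (z - x) := pi_norm_le_enorm _
  _ ≤ ε / 2 := hz
  _ < ε := by linarith

lemma zero_not_int (h5 : ∑ i, w i ^ 2 = 1)
    (h6 : ∀ u ∈ ⋃ j, K j, u ≠ 0 → 0 < ∑ i, u i * w i) (j : Fin m) :
    (0 : Fin d → ℝ) ∉ interior (K j) := by
  intro h0
  obtain ⟨r, hr, hball⟩ := interior_ball h0
  set z : Fin d → ℝ := (-r) • w with hz
  have hzK : z ∈ K j := by
    apply hball
    have : z - 0 = (-r) • w := by rw [hz]; simp
    rw [this, enorm_smul, enorm_w h5, abs_neg, abs_of_pos hr, mul_one]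
  have hz0 : z ≠ 0 := smul_ne_zero (by linarith : (-r : ℝ) ≠ 0) (w_ne_zero h5)
  have := transv h6 hzK hz0
  rw [hz, sumw_smul] at this
  rw [show ∑ i, w i * w i = ∑ i, w i ^ 2 by apply Finset.sum_congr rfl; intros; ring, h5] at this
  linarith

lemma ne_zero_of_mem_int (h5 : ∑ i, w i ^ 2 = 1)
    (h6 : ∀ u ∈ ⋃ j, K j, u ≠ 0 → 0 < ∑ i, u i * w i) {j : Fin m} {x : Fin d → ℝ}
    (hx : x ∈ interior (K j)) : x ≠ 0 := by
  intro h; rw [h] at hx; exact zero_not_int h5 h6 j hx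

lemma not_both (h6 : ∀ u ∈ ⋃ j, K j, u ≠ 0 → 0 < ∑ i, u i * w i)
    {ℓ ℓ' : Fin m} {x : Fin d → ℝ} (hx : x ∈ K ℓ) (hx' : -x ∈ K ℓ') (h0 : x ≠ 0) : False := by
  have h1 := transv h6 hx h0
  have h2 := transv h6 hx' (by simpa using h0)
  rw [sumw_neg] at h2
  linarith

lemma cone_add (h2 : ∀ j, Convex ℝ (K j))
    (h4 : ∀ j, ∀ c : ℝ, 0 ≤ c → ∀ u ∈ K j, c • u ∈ K j)
    {j : Fin m} {u v : Fin d → ℝ} (hu : u ∈ K j) (hv : v ∈ K j) : u + v ∈ K j := by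
  have hmid : (1/2 : ℝ) • u + (1/2 : ℝ) • v ∈ K j :=
    (h2 j) hu hv (by norm_num) (by norm_num) (by norm_num)
  have := h4 j 2 (by norm_num) _ hmid
  rw [smul_add, smul_smul, smul_smul] at this
  norm_num at this
  exact this

lemma smul_mem_interior (h4 : ∀ j, ∀ c : ℝ, 0 ≤ c → ∀ u ∈ K j, c • u ∈ K j)
    {j : Fin m} {c : ℝ} (hc : 0 < c) {x : Fin d → ℝ} (hx : x ∈ interior (K j)) :
    c • x ∈ interior (K j) := by
  have hopen : IsOpen ((c • ·) '' interior (K j)) :=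
    (isOpenMap_smul₀ (ne_of_gt hc)) _ isOpen_interior
  have hsub : ((c • ·) '' interior (K j)) ⊆ K j := by
    rintro y ⟨z, hz, rfl⟩
    exact h4 j c (le_of_lt hc) z (interior_subset hz)
  exact interior_maximal hsub hopen ⟨x, hx, rfl⟩

lemma preconn (h2 : ∀ j, Convex ℝ (K j))
    (h6 : ∀ u ∈ ⋃ j, K j, u ≠ 0 → 0 < ∑ i, u i * w i)
    {j : Fin m} {x₀ : Fin d → ℝ} (hx₀ : x₀ ∈ K j) (hx₀0 : x₀ ≠ 0) :
    IsPreconnected (K j \ {0}) := by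
  apply isPreconnected_of_forall x₀
  intro y hy
  refine ⟨segment ℝ x₀ y, ?_, left_mem_segment ℝ x₀ y, right_mem_segment ℝ x₀ y,
    (convex_segment x₀ y).isPreconnected⟩
  intro z hz
  obtain ⟨a, b, ha, hb, hab, hzeq⟩ := hz
  constructor
  · exact (h2 j).segment_subset hx₀ hy.1 ⟨a, b, ha, hb, hab, hzeq⟩
  · simp only [Set.mem_singleton_iff]
    intro hz0
    rw [hz0] at hzeq
    have hφ : a * (∑ i, x₀ i * w i) + b * (∑ i, y i * w i) = 0 := by
      have h := congrArg (fun v : Fin d → ℝ => ∑ i, v i * w i) hzeq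
      rw [sumw_add, sumw_smul, sumw_smul, sumw_zero] at h
      exact h
    have hp1 : 0 < ∑ i, x₀ i * w i := transv h6 hx₀ hx₀0
    have hp2 : 0 < ∑ i, y i * w i := transv h6 hy.1 (by simpa using hy.2)
    rcases eq_or_lt_of_le ha with h|h
    · rw [← h] at hφ hab
      simp at hφ hab
      rcases hφ with h'|h' <;> [linarith; linarith]
    · nlinarith [mul_nonneg hb hp2.le, mul_pos h hp1]



lemma enorm_normalize {u : Fin d → ℝ} (hu : u ≠ 0) : eucNorm ((eucNorm u)⁻¹ • u) = 1 := by
  have h := enorm_pos hu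
  rw [enorm_smul, abs_of_pos (inv_pos.mpr h), inv_mul_cancel₀ (ne_of_gt h)]

lemma preconn_sub {s U V : Set (Fin d → ℝ)} (hs : IsPreconnected s) (hU : IsOpen U)
    (hV : IsOpen V) (hcov : s ⊆ U ∪ V) (hdisj : ∀ z, z ∈ U → z ∈ V → False)
    {x : Fin d → ℝ} (hx : x ∈ s) (hxU : x ∈ U) : s ⊆ U := by
  intro y hy
  rcases hcov hy with h | h
  · exact h
  · exfalso
    obtain ⟨z, hz⟩ := hs U V hU hV hcov ⟨x, hx, hxU⟩ ⟨y, hy, h⟩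
    exact hdisj z hz.2.1 hz.2.2

lemma exists_base (h3 : ∀ j, (interior (K j)).Nonempty) (h5 : ∑ i, w i ^ 2 = 1)
    (h6 : ∀ u ∈ ⋃ j, K j, u ≠ 0 → 0 < ∑ i, u i * w i) (j : Fin m) :
    ∃ x₀, x₀ ∈ interior (K j) ∧ x₀ ≠ 0 := by
  obtain ⟨x, hx⟩ := h3 j
  exact ⟨x, hx, ne_zero_of_mem_int h5 h6 hx⟩

lemma sign_const (h2 : ∀ j, Convex ℝ (K j)) (h3 : ∀ j, (interior (K j)).Nonempty)
    (h5 : ∑ i, w i ^ 2 = 1)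
    (h6 : ∀ u ∈ ⋃ j, K j, u ≠ 0 → 0 < ∑ i, u i * w i)
    {B : Matrix (Fin d) (Fin d) ℝ} {j ℓ : Fin m}
    (hmap : ∀ u ∈ K j, u ≠ 0 → B.mulVec u ∈ interior (K ℓ) ∨ -B.mulVec u ∈ interior (K ℓ)) :
    ∃ s : ℝ, (s = 1 ∨ s = -1) ∧ ∀ u ∈ K j, u ≠ 0 → s • B.mulVec u ∈ interior (K ℓ) := by
  obtain ⟨x₀, hx₀i, hx₀0⟩ := exists_base h3 h5 h6 j
  have hx₀ : x₀ ∈ K j := interior_subset hx₀i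
  set U := (fun u => B.mulVec u) ⁻¹' (interior (K ℓ)) with hU
  set V := (fun u => -B.mulVec u) ⁻¹' (interior (K ℓ)) with hV
  have hUopen : IsOpen U := (continuous_mulVec_right B).isOpen_preimage _ isOpen_interior
  have hVopen : IsOpen V := ((continuous_mulVec_right B).neg).isOpen_preimage _ isOpen_interior
  have hcover : K j \ {0} ⊆ U ∪ V := by
    intro u hu
    exact hmap u hu.1 (by simpa using hu.2)
  have hdisj : ∀ z, z ∈ U → z ∈ V → False := by
    intro z hzU hzV
    have h0 : B.mulVec z ≠ 0 := ne_zero_of_mem_int h5 h6 hzU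
    exact not_both h6 (interior_subset hzU) (interior_subset hzV) h0
  have hx₀mem : x₀ ∈ K j \ {0} := ⟨hx₀, by simpa using hx₀0⟩
  have hpc := preconn h2 h6 hx₀ hx₀0
  rcases hmap x₀ hx₀ hx₀0 with h | h
  · refine ⟨1, Or.inl rfl, fun u hu hu0 => ?_⟩
    have hsub := preconn_sub hpc hUopen hVopen hcover hdisj hx₀mem h
    have := hsub ⟨hu, by simpa using hu0⟩
    rw [one_smul]; exact this
  · refine ⟨-1, Or.inr rfl, fun u hu hu0 => ?_⟩
    have hdisj' : ∀ z, z ∈ V → z ∈ U → False := fun z h1 h2 => hdisj z h2 h1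
    have hcover' : K j \ {0} ⊆ V ∪ U := by
      intro u hu; rcases hcover hu with h' | h' <;> [exact Or.inr h'; exact Or.inl h']
    have hsub := preconn_sub hpc hVopen hUopen hcover' hdisj' hx₀mem h
    have := hsub ⟨hu, by simpa using hu0⟩
    have h2 : -B.mulVec u ∈ interior (K ℓ) := this
    rw [neg_smul, one_smul]
    exact h2

def mapsConeInt (K : Fin m → Set (Fin d → ℝ)) (B : Matrix (Fin d) (Fin d) ℝ) : Prop :=
  ∀ j, ∃ ℓ, ∃ s : ℝ, (s = 1 ∨ s = -1) ∧
    ∀ u ∈ K j, u ≠ 0 → s • B.mulVec u ∈ interior (K ℓ)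

lemma mapsCone_mul (h5 : ∑ i, w i ^ 2 = 1)
    (h6 : ∀ u ∈ ⋃ j, K j, u ≠ 0 → 0 < ∑ i, u i * w i)
    {A B : Matrix (Fin d) (Fin d) ℝ}
    (hA : mapsConeInt K A) (hB : mapsConeInt K B) : mapsConeInt K (A * B) := by
  intro j
  obtain ⟨ℓ, s, hs, hmB⟩ := hB j
  obtain ⟨ℓ', s', hs', hmA⟩ := hA ℓ
  refine ⟨ℓ', s' * s, ?_, fun u hu hu0 => ?_⟩
  · rcases hs with rfl | rfl <;> rcases hs' with rfl | rfl <;> norm_num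
  · have h1 : s • B.mulVec u ∈ interior (K ℓ) := hmB u hu hu0
    have h10 : s • B.mulVec u ≠ 0 := ne_zero_of_mem_int h5 h6 h1
    have h2 := hmA _ (interior_subset h1) h10
    rw [Matrix.mulVec_smul, smul_smul, Matrix.mulVec_mulVec] at h2
    exact h2


lemma mapsCone_semigroup (h5 : ∑ i, w i ^ 2 = 1)
    (h6 : ∀ u ∈ ⋃ j, K j, u ≠ 0 → 0 < ∑ i, u i * w i)
    {S : Set (Matrix (Fin d) (Fin d) ℝ)}
    (hgen : ∀ A ∈ S, mapsConeInt K A)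
    {B : Matrix (Fin d) (Fin d) ℝ} (hB : B ∈ semigroupOf S) : mapsConeInt K B := by
  suffices h : ∀ l : List (Matrix (Fin d) (Fin d) ℝ), l ≠ [] → (∀ M ∈ l, M ∈ S) →
      mapsConeInt K l.prod by
    obtain ⟨l, hlne, hlmem, rfl⟩ := hB
    exact h l hlne hlmem
  intro l
  induction l with
  | nil => intro h'; exact absurd rfl h'
  | cons a t ih =>
    intro _ hlmem
    rw [List.prod_cons]
    rcases eq_or_ne t [] with rfl | ht
    · rw [List.prod_nil, mul_one]
      exact hgen a (hlmem a (by simp))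
    · exact mapsCone_mul h5 h6 (hgen a (hlmem a (by simp)))
        (ih ht (fun M hM => hlmem M (by simp [hM])))

lemma exists_delta (hm : 0 < m) (h1 : ∀ j, IsClosed (K j))
    (h3 : ∀ j, (interior (K j)).Nonempty)
    (h4 : ∀ j, ∀ c : ℝ, 0 ≤ c → ∀ u ∈ K j, c • u ∈ K j)
    (h5 : ∑ i, w i ^ 2 = 1)
    (h6 : ∀ u ∈ ⋃ j, K j, u ≠ 0 → 0 < ∑ i, u i * w i) :
    ∃ δ > 0, ∀ j, ∀ u ∈ K j, δ * eucNorm u ≤ ∑ i, u i * w i := by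
  set C := (⋃ j, K j) ∩ {u : Fin d → ℝ | eucNorm u = 1} with hC
  have hCcpt : IsCompact C := isCompact_sphere_inter _ (isClosed_iUnion_of_finite h1)
  have hCne : C.Nonempty := by
    obtain ⟨x₀, hx₀i, hx₀0⟩ := exists_base h3 h5 h6 ⟨0, hm⟩
    refine ⟨(eucNorm x₀)⁻¹ • x₀, Set.mem_iUnion.mpr ⟨⟨0, hm⟩, ?_⟩, enorm_normalize hx₀0⟩
    exact h4 _ _ (inv_nonneg.mpr (enorm_nonneg _)) _ (interior_subset hx₀i)
  obtain ⟨v, hv, hmin⟩ := hCcpt.exists_isMinOn hCne (continuous_sumw w).continuousOn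
  have hv0 : v ≠ 0 := by
    intro h
    have := hv.2
    rw [h] at this
    simp only [Set.mem_setOf_eq, enorm_zero] at this
    norm_num at this
  obtain ⟨j₀, hj₀⟩ := Set.mem_iUnion.mp hv.1
  refine ⟨∑ i, v i * w i, transv h6 hj₀ hv0, fun j u hu => ?_⟩
  rcases eq_or_ne u 0 with rfl | hu0
  · simp [enorm_zero]
  · have hpos := enorm_pos hu0
    have humem : (eucNorm u)⁻¹ • u ∈ C :=
      ⟨Set.mem_iUnion.mpr ⟨j, h4 j _ (inv_nonneg.mpr (enorm_nonneg _)) u hu⟩,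
        enorm_normalize hu0⟩
    have h2 : (∑ i, v i * w i) ≤ (eucNorm u)⁻¹ * ∑ i, u i * w i := by
      have := hmin humem
      simpa [sumw_smul, Finset.mul_sum, mul_assoc] using this
    calc (∑ i, v i * w i) * eucNorm u ≤ ((eucNorm u)⁻¹ * ∑ i, u i * w i) * eucNorm u :=
      mul_le_mul_of_nonneg_right h2 (le_of_lt hpos)
    _ = ∑ i, u i * w i := by field_simp

lemma exists_m0 (hm : 0 < m) (h1 : ∀ j, IsClosed (K j))
    (h3 : ∀ j, (interior (K j)).Nonempty)
    (h4 : ∀ j, ∀ c : ℝ, 0 ≤ c → ∀ u ∈ K j, c • u ∈ K j)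
    (h5 : ∑ i, w i ^ 2 = 1)
    (h6 : ∀ u ∈ ⋃ j, K j, u ≠ 0 → 0 < ∑ i, u i * w i)
    {S : Set (Matrix (Fin d) (Fin d) ℝ)} (hSne : S.Nonempty) (hScpt : IsCompact S)
    (hgen : ∀ A ∈ S, mapsConeInt K A) :
    ∃ m₀ > 0, ∀ A ∈ S, ∀ j, ∀ u ∈ K j, m₀ * eucNorm u ≤ eucNorm (A.mulVec u) := by
  set C := (⋃ j, K j) ∩ {u : Fin d → ℝ | eucNorm u = 1} with hC
  have hCcpt : IsCompact C := isCompact_sphere_inter _ (isClosed_iUnion_of_finite h1)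
  have hCne : C.Nonempty := by
    obtain ⟨x₀, hx₀i, hx₀0⟩ := exists_base h3 h5 h6 ⟨0, hm⟩
    refine ⟨(eucNorm x₀)⁻¹ • x₀, Set.mem_iUnion.mpr ⟨⟨0, hm⟩, ?_⟩, enorm_normalize hx₀0⟩
    exact h4 _ _ (inv_nonneg.mpr (enorm_nonneg _)) _ (interior_subset hx₀i)
  have hne0 : ∀ A ∈ S, ∀ u ∈ ⋃ j, K j, u ≠ 0 → A.mulVec u ≠ 0 := by
    intro A hA u hu hu0
    obtain ⟨j, hj⟩ := Set.mem_iUnion.mp hu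
    obtain ⟨ℓ, s, hs, hmap⟩ := hgen A hA j
    have h1' := hmap u hj hu0
    intro h
    rw [h, smul_zero] at h1'
    exact zero_not_int h5 h6 ℓ h1'
  have hcont : Continuous (fun p : Matrix (Fin d) (Fin d) ℝ × (Fin d → ℝ) =>
      eucNorm (p.1.mulVec p.2)) := continuous_enorm.comp continuous_mulVec_pair
  obtain ⟨p, hp, hmin⟩ := (hScpt.prod hCcpt).exists_isMinOn (hSne.prod hCne)
    hcont.continuousOn
  have hppos : 0 < eucNorm (p.1.mulVec p.2) := by
    apply enorm_pos
    exact hne0 p.1 hp.1 p.2 hp.2.1 (by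
      intro h
      have := hp.2.2
      rw [h] at this
      simp only [Set.mem_setOf_eq, enorm_zero] at this
      norm_num at this)
  refine ⟨eucNorm (p.1.mulVec p.2), hppos, fun A hA j u hu => ?_⟩
  rcases eq_or_ne u 0 with rfl | hu0
  · simp [enorm_zero, Matrix.mulVec_zero]
  · have hpos := enorm_pos hu0
    have humem : (A, (eucNorm u)⁻¹ • u) ∈ S ×ˢ C :=
      ⟨hA, Set.mem_iUnion.mpr ⟨j, h4 j _ (inv_nonneg.mpr (enorm_nonneg _)) u hu⟩,
        enorm_normalize hu0⟩
    have h2 : eucNorm (p.1.mulVec p.2) ≤ (eucNorm u)⁻¹ * eucNorm (A.mulVec u) := by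
      have := hmin humem
      simpa [Matrix.mulVec_smul, enorm_smul, abs_of_pos (inv_pos.mpr hpos)] using this
    calc eucNorm (p.1.mulVec p.2) * eucNorm u ≤ ((eucNorm u)⁻¹ * eucNorm (A.mulVec u)) * eucNorm u :=
      mul_le_mul_of_nonneg_right h2 (le_of_lt hpos)
    _ = eucNorm (A.mulVec u) := by field_simp

lemma exists_M0 {S : Set (Matrix (Fin d) (Fin d) ℝ)} (hSne : S.Nonempty)
    (hScpt : IsCompact S) (hne : ∃ u : Fin d → ℝ, eucNorm u = 1) :
    ∃ M₀ ≥ 1, ∀ A ∈ S, opNorm A ≤ M₀ := by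
  obtain ⟨A₀, hA₀, hmax⟩ := hScpt.exists_isMaxOn hSne continuous_crude.continuousOn
  refine ⟨max 1 (Real.sqrt (∑ i, (∑ j, |A₀ i j|) ^ 2)), le_max_left _ _, fun A hA => ?_⟩
  calc opNorm A ≤ Real.sqrt (∑ i, (∑ j, |A i j|) ^ 2) := opNorm_le_crude hne A
  _ ≤ Real.sqrt (∑ i, (∑ j, |A₀ i j|) ^ 2) := hmax hA
  _ ≤ _ := le_max_right _ _


lemma convex_enormBall (x : Fin d → ℝ) (ρ : ℝ) :
    Convex ℝ {z : Fin d → ℝ | eucNorm (z - x) ≤ ρ} := by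
  intro z₁ hz₁ z₂ hz₂ a b ha hb hab
  simp only [Set.mem_setOf_eq] at *
  obtain rfl : b = 1 - a := by linarith
  have hdecomp : a • z₁ + (1 - a) • z₂ - x = a • (z₁ - x) + (1 - a) • (z₂ - x) := by
    module
  calc eucNorm (a • z₁ + (1 - a) • z₂ - x) = eucNorm (a • (z₁ - x) + (1 - a) • (z₂ - x)) := by
        rw [hdecomp]
  _ ≤ eucNorm (a • (z₁ - x)) + eucNorm ((1 - a) • (z₂ - x)) := enorm_add_le _ _
  _ = a * eucNorm (z₁ - x) + (1 - a) * eucNorm (z₂ - x) := by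
      rw [enorm_smul, enorm_smul, abs_of_nonneg ha, abs_of_nonneg hb]
  _ ≤ a * ρ + (1 - a) * ρ := add_le_add (mul_le_mul_of_nonneg_left hz₁ ha)
      (mul_le_mul_of_nonneg_left hz₂ hb)
  _ = ρ := by ring

lemma exists_rho (hm : 0 < m) (h1 : ∀ j, IsClosed (K j)) (h2 : ∀ j, Convex ℝ (K j))
    (h3 : ∀ j, (interior (K j)).Nonempty)
    (h4 : ∀ j, ∀ c : ℝ, 0 ≤ c → ∀ u ∈ K j, c • u ∈ K j)
    (h5 : ∑ i, w i ^ 2 = 1)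
    (h6 : ∀ u ∈ ⋃ j, K j, u ≠ 0 → 0 < ∑ i, u i * w i)
    (h8 : ∀ j₁ j₂, j₁ ≠ j₂ → K j₁ ∩ K j₂ = {0})
    {S : Set (Matrix (Fin d) (Fin d) ℝ)} (hSne : S.Nonempty) (hScpt : IsCompact S)
    (hgen : ∀ A ∈ S, mapsConeInt K A)
    (hm₀ : ∃ m₀ > 0, ∀ A ∈ S, ∀ j, ∀ u ∈ K j, m₀ * eucNorm u ≤ eucNorm (A.mulVec u)) :
    ∃ ρ, 0 < ρ ∧ ρ < 1 ∧ ∀ A ∈ S, ∀ j, ∀ u ∈ K j, u ≠ 0 →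
      ∃ ℓ, ∃ s : ℝ, (s = 1 ∨ s = -1) ∧
        s • A.mulVec u ∈ interior (K ℓ) ∧
        (∀ z, eucNorm (z - s • ((eucNorm (A.mulVec u))⁻¹ • A.mulVec u)) ≤ ρ → z ∈ K ℓ) := by
  obtain ⟨m₀, hm₀pos, hm₀⟩ := hm₀
  set C := (⋃ j, K j) ∩ {u : Fin d → ℝ | eucNorm u = 1} with hCdef
  have hCcpt : IsCompact C := isCompact_sphere_inter _ (isClosed_iUnion_of_finite h1)
  -- nonvanishing on S ×ˢ C
  have hne0 : ∀ p : Matrix (Fin d) (Fin d) ℝ × (Fin d → ℝ), p ∈ S ×ˢ C →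
      p.1.mulVec p.2 ≠ 0 := by
    rintro ⟨A, u⟩ ⟨hA, hu, hu1⟩
    intro h
    have hu0 : u ≠ 0 := by
      intro h'
      rw [h'] at hu1
      simp only [Set.mem_setOf_eq, enorm_zero] at hu1
      norm_num at hu1
    obtain ⟨j, hj⟩ := Set.mem_iUnion.mp hu
    obtain ⟨ℓ, s, hs, hmap⟩ := hgen A hA j
    have := hmap u hj hu0
    rw [h, smul_zero] at this
    exact zero_not_int h5 h6 ℓ this
  -- the compact set of normalized images
  set ψ : Matrix (Fin d) (Fin d) ℝ × (Fin d → ℝ) → (Fin d → ℝ) :=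
    fun p => (eucNorm (p.1.mulVec p.2))⁻¹ • p.1.mulVec p.2 with hψdef
  have hψcont : ContinuousOn ψ (S ×ˢ C) := by
    refine ContinuousOn.smul (f := fun p : Matrix (Fin d) (Fin d) ℝ × (Fin d → ℝ) =>
      (eucNorm (p.1.mulVec p.2))⁻¹) (g := fun p => p.1.mulVec p.2) ?_ ?_
    · apply ContinuousOn.inv₀
      · exact (continuous_enorm.comp continuous_mulVec_pair).continuousOn
      · intro p hp
        exact ne_of_gt (enorm_pos (hne0 p hp))
    · exact continuous_mulVec_pair.continuousOn
  set D₀ : Set (Fin d → ℝ) := ψ '' (S ×ˢ C) with hD₀def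
  have hD₀cpt : IsCompact D₀ := (hScpt.prod hCcpt).image_of_continuousOn hψcont
  set D : Set (Fin d → ℝ) := D₀ ∪ (Neg.neg '' D₀) with hDdef
  have hDcpt : IsCompact D := hD₀cpt.union (hD₀cpt.image continuous_neg)
  set D' : Set (Fin d → ℝ) := D ∩ (⋃ j, K j) with hD'def
  have hD'cpt : IsCompact D' := hDcpt.inter_right (isClosed_iUnion_of_finite h1)
  -- D points: correct sign versions live in interiors
  have hkey : ∀ x ∈ D, x ≠ 0 ∧ ((∃ ℓ, x ∈ interior (K ℓ)) ∨ (∃ ℓ, -x ∈ interior (K ℓ))) := by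
    intro x hx
    have : ∃ p ∈ S ×ˢ C, x = ψ p ∨ x = -ψ p := by
      rcases hx with ⟨p, hp, rfl⟩ | ⟨y, ⟨p, hp, rfl⟩, rfl⟩
      · exact ⟨p, hp, Or.inl rfl⟩
      · exact ⟨p, hp, Or.inr rfl⟩
    obtain ⟨⟨A, u⟩, hp, hxeq⟩ := this
    have hAu0 : A.mulVec u ≠ 0 := hne0 _ hp
    have hc : (0:ℝ) < (eucNorm (A.mulVec u))⁻¹ := inv_pos.mpr (enorm_pos hAu0)
    have hψ0 : ψ (A, u) ≠ 0 := by
      simp only [hψdef]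
      exact smul_ne_zero (ne_of_gt hc) hAu0
    have hx0 : x ≠ 0 := by
      rcases hxeq with rfl | rfl
      · exact hψ0
      · simpa using hψ0
    refine ⟨hx0, ?_⟩
    obtain ⟨j, hj⟩ := Set.mem_iUnion.mp hp.2.1
    have hu0 : u ≠ 0 := by
      intro h'
      have := hp.2.2
      rw [h'] at this
      simp only [Set.mem_setOf_eq, enorm_zero] at this
      norm_num at this
    obtain ⟨ℓ, s, hs, hmap⟩ := hgen A hp.1 j
    have hint : s • A.mulVec u ∈ interior (K ℓ) := hmap u hj hu0
    have hint' : (eucNorm (A.mulVec u))⁻¹ • (s • A.mulVec u) ∈ interior (K ℓ) :=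
      smul_mem_interior h4 hc hint
    have hψint : s • ψ (A, u) ∈ interior (K ℓ) := by
      have heq : s • ψ (A, u) = (eucNorm (A.mulVec u))⁻¹ • (s • A.mulVec u) := by
        simp only [hψdef]
        rw [smul_comm]
      rw [heq]
      exact hint'
    rcases hxeq with rfl | rfl <;> rcases hs with rfl | rfl
    · left; exact ⟨ℓ, by simpa using hψint⟩
    · right; exact ⟨ℓ, by simpa using hψint⟩
    · right; refine ⟨ℓ, by simpa using hψint⟩
    · left; refine ⟨ℓ, by simpa using hψint⟩
  have hD'sub : D' ⊆ ⋃ ℓ, interior (K ℓ) := by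
    rintro x ⟨hxD, hxU⟩
    obtain ⟨hx0, hcases⟩ := hkey x hxD
    rcases hcases with ⟨ℓ, hℓ⟩ | ⟨ℓ, hℓ⟩
    · exact Set.mem_iUnion.mpr ⟨ℓ, hℓ⟩
    · exfalso
      obtain ⟨ℓ'', hℓ''⟩ := Set.mem_iUnion.mp hxU
      exact not_both h6 hℓ'' (interior_subset hℓ) hx0
  obtain ⟨δth, hδth, hthick⟩ := hD'cpt.exists_thickening_subset_open
    (isOpen_iUnion (fun ℓ => isOpen_interior)) hD'sub
  set ρ := min (δth / 2) (1/2) with hρdef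
  have hρpos : 0 < ρ := by
    apply lt_min (by linarith) (by norm_num)
  have hρlt : ρ < 1 := lt_of_le_of_lt (min_le_right _ _) (by norm_num)
  refine ⟨ρ, hρpos, hρlt, fun A hA j u hu hu0 => ?_⟩
  obtain ⟨ℓ, s, hs, hmap⟩ := hgen A hA j
  have hint : s • A.mulVec u ∈ interior (K ℓ) := hmap u hu hu0
  have hAu0 : A.mulVec u ≠ 0 := by
    intro h
    rw [h, smul_zero] at hint
    exact zero_not_int h5 h6 ℓ hint
  have hcAu : 0 < eucNorm (A.mulVec u) := enorm_pos hAu0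
  set x : Fin d → ℝ := s • ((eucNorm (A.mulVec u))⁻¹ • A.mulVec u) with hxdef
  have hxint : x ∈ interior (K ℓ) := by
    rw [hxdef, smul_comm]
    exact smul_mem_interior h4 (inv_pos.mpr hcAu) hint
  have humem : ((A, (eucNorm u)⁻¹ • u)) ∈ S ×ˢ C :=
    ⟨hA, Set.mem_iUnion.mpr ⟨j, h4 j _ (inv_nonneg.mpr (enorm_nonneg _)) u hu⟩,
      enorm_normalize hu0⟩
  have hψv : ψ (A, (eucNorm u)⁻¹ • u) = (eucNorm (A.mulVec u))⁻¹ • A.mulVec u := by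
    simp only [hψdef]
    rw [Matrix.mulVec_smul, enorm_smul, abs_of_pos (inv_pos.mpr (enorm_pos hu0)),
      smul_smul]
    congr 1
    have h1' := ne_of_gt (enorm_pos hu0)
    have h2' := ne_of_gt hcAu
    field_simp
  have hxD : x ∈ D := by
    rcases hs with rfl | rfl
    · exact Set.mem_union_left _ ⟨_, humem, by rw [hψv, hxdef, one_smul]⟩
    · apply Set.mem_union_right
      refine ⟨ψ (A, (eucNorm u)⁻¹ • u), ⟨_, humem, rfl⟩, ?_⟩
      rw [hψv, hxdef]
      exact (neg_one_smul ℝ _).symm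
  have hxD' : x ∈ D' := ⟨hxD, Set.mem_iUnion.mpr ⟨ℓ, interior_subset hxint⟩⟩
  refine ⟨ℓ, s, hs, hint, fun z hz => ?_⟩
  set Bρ := {z' : Fin d → ℝ | eucNorm (z' - x) ≤ ρ} with hBρdef
  have hBρconn : IsPreconnected Bρ := (convex_enormBall x ρ).isPreconnected
  have hcov : Bρ ⊆ interior (K ℓ) ∪ ⋃ ℓ' : {ℓ' : Fin m // ℓ' ≠ ℓ}, interior (K ℓ'.1) := by
    intro z' hz'
    have hz'U : z' ∈ ⋃ ℓ', interior (K ℓ') := by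
      apply hthick
      rw [Metric.mem_thickening_iff]
      refine ⟨x, hxD', ?_⟩
      calc dist z' x = ‖z' - x‖ := dist_eq_norm _ _
      _ ≤ eucNorm (z' - x) := pi_norm_le_enorm _
      _ ≤ ρ := hz'
      _ < δth := lt_of_le_of_lt (min_le_left _ _) (by linarith)
    obtain ⟨ℓ', hℓ'⟩ := Set.mem_iUnion.mp hz'U
    rcases eq_or_ne ℓ' ℓ with rfl | hne
    · exact Or.inl hℓ'
    · exact Or.inr (Set.mem_iUnion.mpr ⟨⟨ℓ', hne⟩, hℓ'⟩)
  have hdisj : ∀ z', z' ∈ interior (K ℓ) →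
      z' ∈ (⋃ ℓ' : {ℓ' : Fin m // ℓ' ≠ ℓ}, interior (K ℓ'.1)) → False := by
    intro z' h1' h2'
    obtain ⟨⟨ℓ', hne⟩, hℓ'⟩ := Set.mem_iUnion.mp h2'
    have hz'0 : z' ≠ 0 := ne_zero_of_mem_int h5 h6 h1'
    have hmem2 : z' ∈ K ℓ ∩ K ℓ' := ⟨interior_subset h1', interior_subset hℓ'⟩
    rw [h8 ℓ ℓ' (Ne.symm hne)] at hmem2
    exact hz'0 hmem2
  have hxBρ : x ∈ Bρ := by
    simp only [hBρdef, Set.mem_setOf_eq, sub_self, enorm_zero]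
    exact le_of_lt hρpos
  have hsub := preconn_sub hBρconn isOpen_interior
    (isOpen_iUnion (fun _ => isOpen_interior)) hcov hdisj hxBρ hxint
  exact interior_subset (hsub hz)


-- Key contraction estimate: if the ball of radius ρ around the unit vector x lies in K ℓ,
-- and B maps K ℓ \ {0} into a signed cone, then ‖Bx‖ dominates ‖By‖ for all y ∈ K ℓ.
lemma contraction_bound
    (h2 : ∀ j, Convex ℝ (K j))
    (h4 : ∀ j, ∀ c : ℝ, 0 ≤ c → ∀ u ∈ K j, c • u ∈ K j)
    (h5 : ∑ i, w i ^ 2 = 1)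
    {δ ρ : ℝ} (hδ : 0 < δ)
    (hδall : ∀ j, ∀ u ∈ K j, δ * eucNorm u ≤ ∑ i, u i * w i)
    (hρ0 : 0 < ρ) (hρ1 : ρ < 1)
    {x : Fin d → ℝ} (hx1 : eucNorm x = 1) {ℓ : Fin m}
    (hball : ∀ z, eucNorm (z - x) ≤ ρ → z ∈ K ℓ)
    {B : Matrix (Fin d) (Fin d) ℝ} {ℓ' : Fin m} {s : ℝ} (hs : s = 1 ∨ s = -1)
    (hmap : ∀ v ∈ K ℓ, v ≠ 0 → s • B.mulVec v ∈ K ℓ')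
    {y : Fin d → ℝ} (hy : y ∈ K ℓ) :
    ρ * δ * eucNorm (B.mulVec y) ≤ eucNorm (B.mulVec x) * eucNorm y := by
  have hxK : x ∈ K ℓ := hball x (by rw [sub_self, enorm_zero]; exact le_of_lt hρ0)
  have habs : |s| = 1 := by rcases hs with rfl | rfl <;> norm_num
  -- reduce to unit y
  rcases eq_or_ne y 0 with rfl | hy0
  · rw [Matrix.mulVec_zero, enorm_zero]
    simp
  have hypos := enorm_pos hy0
  suffices hunit : ∀ y' ∈ K ℓ, eucNorm y' = 1 → ρ * δ * eucNorm (B.mulVec y') ≤ eucNorm (B.mulVec x) by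
    have h1 := hunit ((eucNorm y)⁻¹ • y)
      (h4 ℓ _ (inv_nonneg.mpr (enorm_nonneg _)) y hy) (enorm_normalize hy0)
    rw [Matrix.mulVec_smul, enorm_smul, abs_of_pos (inv_pos.mpr hypos)] at h1
    calc ρ * δ * eucNorm (B.mulVec y)
        = (ρ * δ * ((eucNorm y)⁻¹ * eucNorm (B.mulVec y))) * eucNorm y := by field_simp
    _ ≤ eucNorm (B.mulVec x) * eucNorm y := by
        apply mul_le_mul_of_nonneg_right _ (enorm_nonneg y)
        calc ρ * δ * ((eucNorm y)⁻¹ * eucNorm (B.mulVec y))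
            = ρ * δ * eucNorm ((eucNorm y)⁻¹ • B.mulVec y) := by
              rw [enorm_smul, abs_of_pos (inv_pos.mpr hypos)]
        _ ≤ eucNorm (B.mulVec x) := by
              rw [enorm_smul, abs_of_pos (inv_pos.mpr hypos)]
              exact h1
  intro y hy hy1
  -- the two perturbed vectors
  set p := x + ρ • y with hpdef
  set q := x + (-ρ) • y with hqdef
  have hpK : p ∈ K ℓ := cone_add h2 h4 hxK (h4 ℓ ρ (le_of_lt hρ0) y hy)
  have hqK : q ∈ K ℓ := by
    apply hball
    have : q - x = (-ρ) • y := by rw [hqdef]; abel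
    rw [this, enorm_smul, hy1, abs_neg, abs_of_pos hρ0, mul_one]
  have hq0 : q ≠ 0 := by
    intro h
    have h1 : eucNorm x ≤ eucNorm q + eucNorm ((-ρ) • y) := by
      have : x = q + -((-ρ) • y) := by rw [hqdef]; abel
      calc eucNorm x = eucNorm (q + -((-ρ) • y)) := by rw [← this]
      _ ≤ eucNorm q + eucNorm (-((-ρ) • y)) := enorm_add_le _ _
      _ = eucNorm q + eucNorm ((-ρ) • y) := by rw [enorm_neg]
    rw [h, enorm_zero, enorm_smul, hy1, abs_neg, abs_of_pos hρ0, mul_one, zero_add, hx1] at h1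
    linarith
  have hp0 : p ≠ 0 := by
    intro h
    have hφx : δ * eucNorm x ≤ ∑ i, x i * w i := hδall ℓ x hxK
    have hφy : δ * eucNorm y ≤ ∑ i, y i * w i := hδall ℓ y hy
    have h0 : ∑ i, p i * w i = 0 := by rw [h]; exact sumw_zero w
    have hsum : ∑ i, p i * w i = (∑ i, x i * w i) + ρ * ∑ i, y i * w i := by
      rw [hpdef, sumw_add, sumw_smul]
    rw [h0] at hsum
    rw [hx1, mul_one] at hφx
    rw [hy1, mul_one] at hφy
    nlinarith [mul_le_mul_of_nonneg_left hφy (le_of_lt hρ0)]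
  -- transversality applied to the images
  have himp : δ * eucNorm (B.mulVec p) ≤ s * ∑ i, (B.mulVec p) i * w i := by
    have h1 := hδall ℓ' _ (hmap p hpK hp0)
    rwa [enorm_smul, habs, one_mul, sumw_smul] at h1
  have himq : δ * eucNorm (B.mulVec q) ≤ s * ∑ i, (B.mulVec q) i * w i := by
    have h1 := hδall ℓ' _ (hmap q hqK hq0)
    rwa [enorm_smul, habs, one_mul, sumw_smul] at h1
  have hBp : B.mulVec p = B.mulVec x + ρ • B.mulVec y := by
    rw [hpdef, Matrix.mulVec_add, Matrix.mulVec_smul]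
  have hBq : B.mulVec q = B.mulVec x + (-ρ) • B.mulVec y := by
    rw [hqdef, Matrix.mulVec_add, Matrix.mulVec_smul]
  have hφsum : (∑ i, (B.mulVec p) i * w i) + (∑ i, (B.mulVec q) i * w i)
      = 2 * ∑ i, (B.mulVec x) i * w i := by
    rw [hBp, hBq, sumw_add, sumw_add, sumw_smul, sumw_smul]
    ring
  have hdiff : B.mulVec p - B.mulVec q = (2 * ρ) • B.mulVec y := by
    rw [hBp, hBq]
    module
  have htri : eucNorm (B.mulVec p - B.mulVec q) ≤ eucNorm (B.mulVec p) + eucNorm (B.mulVec q) :=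
    enorm_sub_le _ _
  have hdiffnorm : eucNorm (B.mulVec p - B.mulVec q) = 2 * ρ * eucNorm (B.mulVec y) := by
    rw [hdiff, enorm_smul, abs_of_pos (by linarith)]
  have hcs : s * ∑ i, (B.mulVec x) i * w i ≤ eucNorm (B.mulVec x) := by
    have h1 : |∑ i, (B.mulVec x) i * w i| ≤ eucNorm (B.mulVec x) * eucNorm w :=
      abs_sum_mul_le _ _
    rw [enorm_w h5, mul_one] at h1
    have h2' : s * ∑ i, (B.mulVec x) i * w i ≤ |∑ i, (B.mulVec x) i * w i| := by
      rcases hs with rfl | rfl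
      · rw [one_mul]; exact le_abs_self _
      · rw [neg_one_mul]; exact neg_le_abs _
    linarith
  -- combine
  have hmain : δ * (2 * ρ * eucNorm (B.mulVec y)) ≤ 2 * eucNorm (B.mulVec x) := by
    calc δ * (2 * ρ * eucNorm (B.mulVec y)) = δ * eucNorm (B.mulVec p - B.mulVec q) := by
          rw [hdiffnorm]
    _ ≤ δ * (eucNorm (B.mulVec p) + eucNorm (B.mulVec q)) :=
          mul_le_mul_of_nonneg_left htri (le_of_lt hδ)
    _ = δ * eucNorm (B.mulVec p) + δ * eucNorm (B.mulVec q) := by ring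
    _ ≤ s * (∑ i, (B.mulVec p) i * w i) + s * (∑ i, (B.mulVec q) i * w i) :=
          add_le_add himp himq
    _ = s * ((∑ i, (B.mulVec p) i * w i) + (∑ i, (B.mulVec q) i * w i)) := by ring
    _ = s * (2 * ∑ i, (B.mulVec x) i * w i) := by rw [hφsum]
    _ = 2 * (s * ∑ i, (B.mulVec x) i * w i) := by ring
    _ ≤ 2 * eucNorm (B.mulVec x) := by linarith
  linarith


lemma exists_kappa (hm : 0 < m) (h2 : ∀ j, Convex ℝ (K j))
    (h3 : ∀ j, (interior (K j)).Nonempty)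
    (h4 : ∀ j, ∀ c : ℝ, 0 ≤ c → ∀ u ∈ K j, c • u ∈ K j)
    (h5 : ∑ i, w i ^ 2 = 1)
    (h6 : ∀ u ∈ ⋃ j, K j, u ≠ 0 → 0 < ∑ i, u i * w i)
    {δ ρ : ℝ} (hδ : 0 < δ)
    (hδall : ∀ j, ∀ u ∈ K j, δ * eucNorm u ≤ ∑ i, u i * w i)
    (hρ0 : 0 < ρ) (hρ1 : ρ < 1)
    (hne : ∃ u : Fin d → ℝ, eucNorm u = 1) :
    ∃ κ > 0, ∀ B : Matrix (Fin d) (Fin d) ℝ,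
      (∀ ℓ, ∃ ℓ', ∃ s : ℝ, (s = 1 ∨ s = -1) ∧ ∀ v ∈ K ℓ, v ≠ 0 → s • B.mulVec v ∈ K ℓ') →
      ∀ ℓ (x : Fin d → ℝ), eucNorm x = 1 → (∀ z, eucNorm (z - x) ≤ ρ → z ∈ K ℓ) →
      κ * opNorm B ≤ eucNorm (B.mulVec x) := by
  have hbase : ∀ ℓ : Fin m, ∃ p : (Fin d → ℝ) × ℝ, 0 < p.2 ∧ p.1 ∈ K ℓ ∧
      (∀ z, eucNorm (z - p.1) ≤ p.2 → z ∈ K ℓ) := by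
    intro ℓ
    obtain ⟨x₀, hx₀i, hx₀0⟩ := exists_base h3 h5 h6 ℓ
    obtain ⟨r, hr, hball⟩ := interior_ball hx₀i
    exact ⟨(x₀, r), hr, interior_subset hx₀i, hball⟩
  choose p hr hx₀K hx₀ball using hbase
  set x₀ : Fin m → (Fin d → ℝ) := fun ℓ => (p ℓ).1 with hx₀def
  set r : Fin m → ℝ := fun ℓ => (p ℓ).2 with hrdef
  set c : Fin m → ℝ := fun ℓ => ρ * δ * r ℓ / (2 * eucNorm (x₀ ℓ) + r ℓ) with hcdef
  have h2X : ∀ ℓ, 0 < 2 * eucNorm (x₀ ℓ) + r ℓ := by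
    intro ℓ
    have := enorm_nonneg (x₀ ℓ)
    have := hr ℓ
    simp only [hrdef, hx₀def] at *
    linarith
  have hcpos : ∀ ℓ, 0 < c ℓ := by
    intro ℓ
    apply div_pos _ (h2X ℓ)
    have := hr ℓ
    simp only [hrdef] at *
    positivity
  obtain ⟨ℓmin, -, hmin⟩ := Finset.exists_min_image Finset.univ c ⟨⟨0, hm⟩, Finset.mem_univ _⟩
  refine ⟨c ℓmin, hcpos ℓmin, fun B hB ℓ x hx1 hball => ?_⟩
  obtain ⟨ℓ', s, hs, hmap⟩ := hB ℓ
  have hI1 : ∀ y ∈ K ℓ, ρ * δ * eucNorm (B.mulVec y) ≤ eucNorm (B.mulVec x) * eucNorm y :=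
    fun y hy => contraction_bound h2 h4 h5 hδ hδall hρ0 hρ1 hx1 hball hs hmap hy
  obtain ⟨xs, hxs1, hxsmax⟩ := exists_opNorm_attained hne B
  have hrℓ : 0 < r ℓ := hr ℓ
  have hy₁ : x₀ ℓ + (r ℓ) • xs ∈ K ℓ := by
    apply hx₀ball ℓ
    have heq : x₀ ℓ + (r ℓ) • xs - x₀ ℓ = (r ℓ) • xs := by abel
    rw [heq, enorm_smul, hxs1, abs_of_pos hrℓ, mul_one]
  have hBxs : B.mulVec xs = (r ℓ)⁻¹ • (B.mulVec (x₀ ℓ + r ℓ • xs) - B.mulVec (x₀ ℓ)) := by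
    rw [Matrix.mulVec_add, Matrix.mulVec_smul, add_sub_cancel_left, smul_smul,
      inv_mul_cancel₀ (ne_of_gt hrℓ), one_smul]
  have hopB : opNorm B ≤ (r ℓ)⁻¹ *
      (eucNorm (B.mulVec (x₀ ℓ + r ℓ • xs)) + eucNorm (B.mulVec (x₀ ℓ))) := by
    rw [← hxsmax, hBxs, enorm_smul, abs_of_pos (inv_pos.mpr hrℓ)]
    exact mul_le_mul_of_nonneg_left (enorm_sub_le _ _) (inv_nonneg.mpr (le_of_lt hrℓ))
  have hy₁n : eucNorm (x₀ ℓ + r ℓ • xs) ≤ eucNorm (x₀ ℓ) + r ℓ := by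
    calc eucNorm (x₀ ℓ + r ℓ • xs) ≤ eucNorm (x₀ ℓ) + eucNorm (r ℓ • xs) := enorm_add_le _ _
    _ = eucNorm (x₀ ℓ) + r ℓ := by rw [enorm_smul, hxs1, abs_of_pos hrℓ, mul_one]
  have e1 : ρ * δ * eucNorm (B.mulVec (x₀ ℓ + r ℓ • xs)) ≤
      eucNorm (B.mulVec x) * (eucNorm (x₀ ℓ) + r ℓ) :=
    le_trans (hI1 _ hy₁) (mul_le_mul_of_nonneg_left hy₁n (enorm_nonneg _))
  have e2 : ρ * δ * eucNorm (B.mulVec (x₀ ℓ)) ≤ eucNorm (B.mulVec x) * eucNorm (x₀ ℓ) :=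
    hI1 _ (hx₀K ℓ)
  have hRN : r ℓ * opNorm B ≤
      eucNorm (B.mulVec (x₀ ℓ + r ℓ • xs)) + eucNorm (B.mulVec (x₀ ℓ)) := by
    have h' := mul_le_mul_of_nonneg_left hopB (le_of_lt hrℓ)
    rwa [← mul_assoc, mul_inv_cancel₀ (ne_of_gt hrℓ), one_mul] at h'
  have hfinal : ρ * δ * (r ℓ) * opNorm B ≤ (2 * eucNorm (x₀ ℓ) + r ℓ) * eucNorm (B.mulVec x) := by
    nlinarith [mul_le_mul_of_nonneg_left hRN (le_of_lt (mul_pos hρ0 hδ))]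
  have hc : c ℓmin ≤ c ℓ := hmin ℓ (Finset.mem_univ ℓ)
  have hNnonneg : 0 ≤ opNorm B := opNorm_nonneg hne B
  calc c ℓmin * opNorm B ≤ c ℓ * opNorm B := mul_le_mul_of_nonneg_right hc hNnonneg
  _ ≤ eucNorm (B.mulVec x) := by
      simp only [hcdef]
      rw [div_mul_eq_mul_div, div_le_iff₀ (h2X ℓ)]
      nlinarith [hfinal]


end Aux
end

/-- Proposition 3.4: uniform lower bounds on the growth of vectors in the multicone and
reverse submultiplicativity of the operator norm on the generated semigroup. -/
theorem stmt4 {d m : ℕ} (hm : 0 < m)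
    (S : Set (Matrix (Fin d) (Fin d) ℝ)) (hSne : S.Nonempty) (hScpt : IsCompact S)
    (K : Fin m → Set (Fin d → ℝ)) (w : Fin d → ℝ) (hK : IsMulticone S K w) :
    ∃ τ₁ τ₂ τ₃ : ℝ, 0 < τ₁ ∧ 0 < τ₂ ∧ 0 < τ₃ ∧
      (∀ u ∈ ⋃ j, K j, ∀ A ∈ semigroupOf S,
        τ₁ * opNorm A * eucNorm u ≤ eucNorm (A.mulVec u)) ∧
      (∀ u ∈ ⋃ j, K j, ∀ A ∈ semigroupOf S,
        τ₂ * opNorm A * eucNorm u ≤ |∑ i, A.mulVec u i * w i|) ∧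
      (∀ A₁ ∈ semigroupOf S, ∀ A₂ ∈ semigroupOf S,
        τ₃ * opNorm A₁ * opNorm A₂ ≤ opNorm (A₁ * A₂)) := by
  obtain ⟨h1, h2, h3, h4, h5, h6, h7, h8⟩ := hK
  have hne : ∃ u : Fin d → ℝ, eucNorm u = 1 := ⟨w, Aux.enorm_w h5⟩
  have hgen : ∀ A ∈ S, Aux.mapsConeInt K A := by
    intro A hA j
    obtain ⟨ℓ, hℓ⟩ := h7 A hA j
    obtain ⟨s, hs, hmap⟩ := Aux.sign_const h2 h3 h5 h6 hℓ
    exact ⟨ℓ, s, hs, hmap⟩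
  have hsg : ∀ A ∈ semigroupOf S, Aux.mapsConeInt K A := fun A hA =>
    Aux.mapsCone_semigroup h5 h6 hgen hA
  obtain ⟨δ, hδ, hδall⟩ := Aux.exists_delta hm h1 h3 h4 h5 h6
  obtain ⟨m₀, hm₀pos, hm₀⟩ := Aux.exists_m0 hm h1 h3 h4 h5 h6 hSne hScpt hgen
  obtain ⟨M₀, hM₀1, hM₀⟩ := Aux.exists_M0 hSne hScpt hne
  have hM₀pos : (0:ℝ) < M₀ := lt_of_lt_of_le one_pos hM₀1
  obtain ⟨ρ, hρ0, hρ1, hρ⟩ := Aux.exists_rho hm h1 h2 h3 h4 h5 h6 h8 hSne hScpt hgen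
    ⟨m₀, hm₀pos, hm₀⟩
  obtain ⟨κ, hκpos, hκ⟩ := Aux.exists_kappa hm h2 h3 h4 h5 h6 hδ hδall hρ0 hρ1 hne
  set κ' := min κ 1 with hκ'def
  have hκ'pos : 0 < κ' := lt_min hκpos one_pos
  set τ₁ := m₀ * κ' / M₀ with hτ₁def
  have hτ₁pos : 0 < τ₁ := div_pos (mul_pos hm₀pos hκ'pos) hM₀pos
  -- main estimate (i)
  have main1 : ∀ A ∈ semigroupOf S, ∀ j, ∀ u ∈ K j,
      τ₁ * opNorm A * eucNorm u ≤ eucNorm (A.mulVec u) := by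
    intro A hA j u hu
    obtain ⟨l, hlne, hlmem, rfl⟩ := hA
    rcases l.eq_nil_or_concat with rfl | ⟨L, a, rfl⟩
    · exact absurd rfl hlne
    have hprodeq : (L.concat a).prod = L.prod * a := by
      rw [List.concat_eq_append, List.prod_append, List.prod_cons, List.prod_nil, mul_one]
    rw [hprodeq]
    have haS : a ∈ S := hlmem a (by simp)
    rcases eq_or_ne L [] with rfl | hLne
    · rw [List.prod_nil, one_mul]
      have hb := hm₀ a haS j u hu
      have hAle : opNorm a ≤ M₀ := hM₀ a haS
      have hτM : τ₁ * M₀ = m₀ * κ' := by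
        rw [hτ₁def]
        field_simp
      calc τ₁ * opNorm a * eucNorm u ≤ τ₁ * M₀ * eucNorm u := by
            apply mul_le_mul_of_nonneg_right _ (Aux.enorm_nonneg u)
            exact mul_le_mul_of_nonneg_left hAle (le_of_lt hτ₁pos)
      _ = m₀ * κ' * eucNorm u := by rw [hτM]
      _ ≤ m₀ * 1 * eucNorm u := by
            apply mul_le_mul_of_nonneg_right _ (Aux.enorm_nonneg u)
            exact mul_le_mul_of_nonneg_left (min_le_right κ 1) (le_of_lt hm₀pos)
      _ = m₀ * eucNorm u := by ring
      _ ≤ eucNorm (a.mulVec u) := hb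
    · set B := L.prod with hBdef
      have hBsg : B ∈ semigroupOf S := ⟨L, hLne, fun M hM => hlmem M (by simp [hM]), rfl⟩
      rcases eq_or_ne u 0 with rfl | hu0
      · simp [Matrix.mulVec_zero, Aux.enorm_zero]
      obtain ⟨ℓ, s, hs, hint, hball⟩ := hρ a haS j u hu hu0
      have habs : |s| = 1 := by rcases hs with rfl | rfl <;> norm_num
      set v := a.mulVec u with hvdef
      have hv0 : v ≠ 0 := by
        intro h
        rw [h, smul_zero] at hint
        exact (Aux.zero_not_int h5 h6 ℓ) hint
      have hvpos := Aux.enorm_pos hv0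
      set x := s • ((eucNorm v)⁻¹ • v) with hxdef
      have hx1 : eucNorm x = 1 := by
        rw [hxdef, Aux.enorm_smul, habs, one_mul]
        exact Aux.enorm_normalize hv0
      have hBprop : ∀ ℓ₀, ∃ ℓ'', ∃ s'' : ℝ, (s'' = 1 ∨ s'' = -1) ∧
          ∀ v' ∈ K ℓ₀, v' ≠ 0 → s'' • B.mulVec v' ∈ K ℓ'' := by
        intro ℓ₀
        obtain ⟨ℓ'', s'', hs'', hmp⟩ := hsg B hBsg ℓ₀
        exact ⟨ℓ'', s'', hs'', fun v' hv' hv'0 => interior_subset (hmp v' hv' hv'0)⟩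
      have hκB := hκ B hBprop ℓ x hx1 hball
      have hBx : eucNorm (B.mulVec x) = (eucNorm v)⁻¹ * eucNorm (B.mulVec v) := by
        rw [hxdef, Matrix.mulVec_smul, Matrix.mulVec_smul, Aux.enorm_smul, habs, one_mul,
          Aux.enorm_smul, abs_of_pos (inv_pos.mpr hvpos)]
      have hBop : opNorm (B * a) ≤ opNorm B * M₀ :=
        le_trans (Aux.opNorm_mul_le hne B a)
          (mul_le_mul_of_nonneg_left (hM₀ a haS) (Aux.opNorm_nonneg hne B))
      have hopBnn : 0 ≤ opNorm B := Aux.opNorm_nonneg hne B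
      have a1 : m₀ * eucNorm u ≤ eucNorm v := hm₀ a haS j u hu
      have hstep2 : τ₁ * (opNorm B * M₀) = m₀ * κ' * opNorm B := by
        rw [hτ₁def]
        field_simp
      calc τ₁ * opNorm (B * a) * eucNorm u ≤ τ₁ * (opNorm B * M₀) * eucNorm u := by
            apply mul_le_mul_of_nonneg_right _ (Aux.enorm_nonneg u)
            exact mul_le_mul_of_nonneg_left hBop (le_of_lt hτ₁pos)
      _ = m₀ * κ' * opNorm B * eucNorm u := by rw [hstep2]
      _ ≤ m₀ * κ * opNorm B * eucNorm u := by
            apply mul_le_mul_of_nonneg_right _ (Aux.enorm_nonneg u)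
            apply mul_le_mul_of_nonneg_right _ hopBnn
            exact mul_le_mul_of_nonneg_left (min_le_left κ 1) (le_of_lt hm₀pos)
      _ = (κ * opNorm B) * (m₀ * eucNorm u) := by ring
      _ ≤ (κ * opNorm B) * eucNorm v :=
            mul_le_mul_of_nonneg_left a1 (mul_nonneg (le_of_lt hκpos) hopBnn)
      _ ≤ ((eucNorm v)⁻¹ * eucNorm (B.mulVec v)) * eucNorm v := by
            apply mul_le_mul_of_nonneg_right _ (Aux.enorm_nonneg v)
            rw [← hBx]
            exact hκB
      _ = eucNorm (B.mulVec v) := by field_simp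
      _ = eucNorm ((B * a).mulVec u) := by rw [← Matrix.mulVec_mulVec]
  -- conclusion
  refine ⟨τ₁, δ * τ₁, τ₁ * τ₁, hτ₁pos, mul_pos hδ hτ₁pos, mul_pos hτ₁pos hτ₁pos,
    ?_, ?_, ?_⟩
  · intro u hu A hA
    obtain ⟨j, hj⟩ := Set.mem_iUnion.mp hu
    exact main1 A hA j u hj
  · intro u hu A hA
    obtain ⟨j, hj⟩ := Set.mem_iUnion.mp hu
    rcases eq_or_ne u 0 with rfl | hu0
    · simp [Matrix.mulVec_zero, Aux.enorm_zero]
    obtain ⟨ℓ, s, hs, hmap⟩ := hsg A hA j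
    have hint := hmap u hj hu0
    have habs : |s| = 1 := by rcases hs with rfl | rfl <;> norm_num
    have hmem : s • A.mulVec u ∈ K ℓ := interior_subset hint
    have hδ1 := hδall ℓ _ hmem
    rw [Aux.enorm_smul, habs, one_mul, Aux.sumw_smul] at hδ1
    have h2' : s * ∑ i, (A.mulVec u) i * w i ≤ |∑ i, (A.mulVec u) i * w i| := by
      rcases hs with rfl | rfl
      · rw [one_mul]; exact le_abs_self _
      · rw [neg_one_mul]; exact neg_le_abs _
    have h3' : τ₁ * opNorm A * eucNorm u ≤ eucNorm (A.mulVec u) := main1 A hA j u hj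
    calc δ * τ₁ * opNorm A * eucNorm u = δ * (τ₁ * opNorm A * eucNorm u) := by ring
    _ ≤ δ * eucNorm (A.mulVec u) := mul_le_mul_of_nonneg_left h3' (le_of_lt hδ)
    _ ≤ |∑ i, (A.mulVec u) i * w i| := by linarith
  · intro A₁ hA₁ A₂ hA₂
    obtain ⟨x₀, hx₀i, hx₀0⟩ := Aux.exists_base h3 h5 h6 ⟨0, hm⟩
    set u₀ := (eucNorm x₀)⁻¹ • x₀ with hu₀def
    have hu₀K : u₀ ∈ K ⟨0, hm⟩ :=
      h4 _ _ (inv_nonneg.mpr (Aux.enorm_nonneg _)) _ (interior_subset hx₀i)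
    have hu₀1 : eucNorm u₀ = 1 := Aux.enorm_normalize hx₀0
    have hu₀0 : u₀ ≠ 0 := by
      intro h
      rw [h, Aux.enorm_zero] at hu₀1
      norm_num at hu₀1
    have hb2 : τ₁ * opNorm A₂ * 1 ≤ eucNorm (A₂.mulVec u₀) := by
      have := main1 A₂ hA₂ ⟨0, hm⟩ u₀ hu₀K
      rwa [hu₀1] at this
    set v := A₂.mulVec u₀ with hvdef
    obtain ⟨ℓ, s, hs, hmap⟩ := hsg A₂ hA₂ ⟨0, hm⟩
    have hint := hmap u₀ hu₀K hu₀0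
    have habs : |s| = 1 := by rcases hs with rfl | rfl <;> norm_num
    have hsv : s • v ∈ K ℓ := interior_subset hint
    have hb1 : τ₁ * opNorm A₁ * eucNorm (s • v) ≤ eucNorm (A₁.mulVec (s • v)) :=
      main1 A₁ hA₁ ℓ _ hsv
    rw [Aux.enorm_smul, habs, one_mul, Matrix.mulVec_smul, Aux.enorm_smul, habs, one_mul] at hb1
    have hup : eucNorm ((A₁ * A₂).mulVec u₀) ≤ opNorm (A₁ * A₂) :=
      Aux.enorm_mulVec_le_of_unit hne _ hu₀1
    calc τ₁ * τ₁ * opNorm A₁ * opNorm A₂ = (τ₁ * opNorm A₁) * (τ₁ * opNorm A₂ * 1) := by ring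
    _ ≤ (τ₁ * opNorm A₁) * eucNorm v := by
          apply mul_le_mul_of_nonneg_left hb2
          exact mul_nonneg (le_of_lt hτ₁pos) (Aux.opNorm_nonneg hne A₁)
    _ ≤ eucNorm (A₁.mulVec v) := hb1
    _ = eucNorm ((A₁ * A₂).mulVec u₀) := by rw [hvdef, Matrix.mulVec_mulVec]
    _ ≤ opNorm (A₁ * A₂) := hup
end

section
/- Let d ≥ 1 and let 𝖠 ⊆ M_d(ℝ) be compact and nonempty with a multicone (K_1,…,K_m) and transverse-defining vector w, and let Ω := {z ∈ ℂ^d : z ∈ ∪_{j=1}^m int(K_j^ℂ) and ⟨z,w⟩ = 1} with Āz := ⟨Az,w⟩^{-1} Az for A ∈ 𝒮(𝖠). Then the set ∪_{A ∈ 𝒮(𝖠)} Ā(Ω) is compactly contained in Ω: its closure in ℂ^d is a compact set contained in the interior of Ω relative to the hyperplane {z ∈ ℂ^d : ⟨z,w⟩ = 1}. -/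
open scoped BigOperators Pointwise

noncomputable section
namespace Stmt10Aux

variable {d : ℕ}

def Phi (c : ℂ) (u v : Fin d → ℝ) : Fin d → ℂ :=
  fun i => c * (((u i : ℂ) + (v i : ℂ)) + Complex.I * ((u i : ℂ) - (v i : ℂ)))

def pairC (w : Fin d → ℝ) (z : Fin d → ℂ) : ℂ := ∑ i, z i * (w i : ℂ)

def pairR (w : Fin d → ℝ) (u : Fin d → ℝ) : ℝ := ∑ i, u i * w i

lemma Phi_mem_complexify {K : Set (Fin d → ℝ)} {u v : Fin d → ℝ} (c : ℂ)
    (hu : u ∈ K) (hv : v ∈ K) : Phi c u v ∈ complexify K := ⟨c, u, v, hu, hv, rfl⟩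

lemma mem_complexify_rep {K : Set (Fin d → ℝ)} {z : Fin d → ℂ} (h : z ∈ complexify K) :
    ∃ c u v, u ∈ K ∧ v ∈ K ∧ z = Phi c u v := h

lemma pair_Phi (w : Fin d → ℝ) (c : ℂ) (u v : Fin d → ℝ) :
    pairC w (Phi c u v) =
      c * ((pairR w (u + v) : ℝ) + Complex.I * (pairR w (u - v) : ℝ)) := by
  have h : ∀ i : Fin d, Phi c u v i * (w i : ℂ) =
      c * (((u i + v i) * w i : ℝ) : ℂ) + c * Complex.I * (((u i - v i) * w i : ℝ) : ℂ) := by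
    intro i; simp only [Phi]; push_cast; ring
  unfold pairC pairR
  rw [Finset.sum_congr rfl (fun i _ => h i), Finset.sum_add_distrib, ← Finset.mul_sum,
    ← Finset.mul_sum]
  push_cast
  simp only [Pi.add_apply, Pi.sub_apply]
  push_cast
  ring

lemma pair_smul (w : Fin d → ℝ) (a : ℂ) (z : Fin d → ℂ) :
    pairC w (a • z) = a * pairC w z := by
  unfold pairC
  rw [Finset.mul_sum]
  exact Finset.sum_congr rfl fun i _ => by simp [mul_assoc]

end Stmt10Aux
end
noncomputable section
namespace Stmt10Aux
variable {d : ℕ}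

section Cone
variable {K : Set (Fin d → ℝ)} {w : Fin d → ℝ}

lemma zero_mem_cone (hne : K.Nonempty)
    (hcone : ∀ c : ℝ, 0 ≤ c → ∀ u ∈ K, c • u ∈ K) : (0 : Fin d → ℝ) ∈ K := by
  obtain ⟨u, hu⟩ := hne
  simpa using hcone 0 le_rfl u hu

lemma add_mem_cone (hconv : Convex ℝ K)
    (hcone : ∀ c : ℝ, 0 ≤ c → ∀ u ∈ K, c • u ∈ K)
    {u v : Fin d → ℝ} (hu : u ∈ K) (hv : v ∈ K) : u + v ∈ K := by
  have h := hconv hu hv (by norm_num : (0:ℝ) ≤ 1/2) (by norm_num : (0:ℝ) ≤ 1/2) (by norm_num)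
  have h2 := hcone 2 (by norm_num) _ h
  have : (2:ℝ) • ((1/2 : ℝ) • u + (1/2 : ℝ) • v) = u + v := by
    rw [smul_add, smul_smul, smul_smul]; norm_num
  rwa [this] at h2

lemma add_eq_zero_of_cone (hpos : ∀ u ∈ K, u ≠ 0 → 0 < pairR w u)
    (hconv : Convex ℝ K) (hcone : ∀ c : ℝ, 0 ≤ c → ∀ u ∈ K, c • u ∈ K)
    {u v : Fin d → ℝ} (hu : u ∈ K) (hv : v ∈ K) (h : u + v = 0) : u = 0 ∧ v = 0 := by
  by_contra hc
  have hs : u + v ≠ 0 ∨ True := Or.inr trivial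
  have huv : u + v ∈ K := add_mem_cone hconv hcone hu hv
  -- if u ≠ 0 then pairR w u > 0; similarly v; but pairR w (u+v) = 0
  have hp0 : pairR w (u + v) = 0 := by rw [h]; unfold pairR; simp
  have hupos : u ≠ 0 ∨ v ≠ 0 := by
    by_contra h2
    push_neg at h2
    exact hc ⟨h2.1, h2.2⟩
  have hsum : pairR w (u + v) = pairR w u + pairR w v := by
    unfold pairR; rw [← Finset.sum_add_distrib]
    exact Finset.sum_congr rfl fun i _ => by simp [Pi.add_apply]; ring
  have hu0 : 0 ≤ pairR w u := by
    rcases eq_or_ne u 0 with h'|h'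
    · rw [h']; unfold pairR; simp
    · exact (hpos u hu h').le
  have hv0 : 0 ≤ pairR w v := by
    rcases eq_or_ne v 0 with h'|h'
    · rw [h']; unfold pairR; simp
    · exact (hpos v hv h').le
  rcases hupos with h'|h'
  · have := hpos u hu h'
    linarith [hsum ▸ hp0]
  · have := hpos v hv h'
    linarith [hsum ▸ hp0]

lemma zero_not_mem_interior (hw : ∑ i, w i ^ 2 = 1)
    (hpos : ∀ u ∈ K, u ≠ 0 → 0 < pairR w u) : (0 : Fin d → ℝ) ∉ interior K := by
  intro h0
  obtain ⟨r, hr, hball⟩ := Metric.isOpen_iff.1 isOpen_interior 0 h0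
  have hwne : w ≠ 0 := by
    intro h
    rw [h] at hw; simp at hw
  have hwn : 0 < ‖w‖ := norm_pos_iff.2 hwne
  set t : ℝ := r / (2 * ‖w‖) with ht
  have htpos : 0 < t := by positivity
  have hx : (-t) • w ∈ Metric.ball (0 : Fin d → ℝ) r := by
    rw [Metric.mem_ball, dist_zero_right, norm_smul]
    simp only [norm_neg, Real.norm_eq_abs, abs_of_pos htpos]
    rw [ht]
    rw [div_mul_eq_mul_div]
    rw [div_lt_iff₀ (by positivity)]
    nlinarith [hwn]
  have hxK : (-t) • w ∈ K := interior_subset (hball hx)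
  have hxne : (-t) • w ≠ 0 := by
    simp only [ne_eq, smul_eq_zero, not_or]
    exact ⟨by linarith, hwne⟩
  have := hpos _ hxK hxne
  unfold pairR at this
  have heq : ∑ i, ((-t) • w) i * w i = -t * ∑ i, w i ^ 2 := by
    rw [Finset.mul_sum]
    exact Finset.sum_congr rfl fun i _ => by simp [Pi.smul_apply, smul_eq_mul]; ring
  rw [heq, hw] at this
  linarith

end Cone
end Stmt10Aux
end
noncomputable section
namespace Stmt10Aux
variable {d : ℕ}
section Cplx
variable {K : Set (Fin d → ℝ)} {w : Fin d → ℝ}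

lemma smul_Phi (a c : ℂ) (u v : Fin d → ℝ) : a • Phi c u v = Phi (a * c) u v := by
  funext i; simp [Phi]; ring

lemma smul_mem_complexify {z : Fin d → ℂ} (a : ℂ) (h : z ∈ complexify K) :
    a • z ∈ complexify K := by
  obtain ⟨c, u, v, hu, hv, rfl⟩ := mem_complexify_rep h
  rw [smul_Phi]
  exact Phi_mem_complexify _ hu hv

lemma smul_complexify_eq {a : ℂ} (ha : a ≠ 0) : a • complexify K = complexify K := by
  apply Set.Subset.antisymm
  · rintro z ⟨y, hy, rfl⟩
    exact smul_mem_complexify a hy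
  · intro z hz
    exact ⟨a⁻¹ • z, smul_mem_complexify _ hz, by
      show a • a⁻¹ • z = z
      rw [smul_smul, mul_inv_cancel₀ ha, one_smul]⟩

lemma smul_mem_interior_complexify {z : Fin d → ℂ} {a : ℂ} (ha : a ≠ 0)
    (h : z ∈ interior (complexify K)) : a • z ∈ interior (complexify K) := by
  have := interior_smul₀ ha (complexify K)
  rw [smul_complexify_eq ha] at this
  rw [this]
  exact ⟨z, h, rfl⟩

lemma rep_of_ne_zero (hpos : ∀ u ∈ K, u ≠ 0 → 0 < pairR w u)
    (hconv : Convex ℝ K) (hcone : ∀ c : ℝ, 0 ≤ c → ∀ u ∈ K, c • u ∈ K)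
    {z : Fin d → ℂ} (h : z ∈ complexify K) (hz : z ≠ 0) :
    ∃ c u v, c ≠ 0 ∧ u ∈ K ∧ v ∈ K ∧ u + v ≠ 0 ∧ z = Phi c u v := by
  obtain ⟨c, u, v, hu, hv, rfl⟩ := mem_complexify_rep h
  refine ⟨c, u, v, ?_, hu, hv, ?_, rfl⟩
  · rintro rfl
    exact hz (by funext i; simp [Phi])
  · intro hsum
    obtain ⟨rfl, rfl⟩ := add_eq_zero_of_cone hpos hconv hcone hu hv hsum
    exact hz (by funext i; simp [Phi])

lemma pair_Phi_ne_zero (hpos : ∀ u ∈ K, u ≠ 0 → 0 < pairR w u)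
    (hconv : Convex ℝ K) (hcone : ∀ c : ℝ, 0 ≤ c → ∀ u ∈ K, c • u ∈ K)
    {c : ℂ} {u v : Fin d → ℝ} (hc : c ≠ 0) (hu : u ∈ K) (hv : v ∈ K)
    (huv : u + v ≠ 0) : pairC w (Phi c u v) ≠ 0 := by
  rw [pair_Phi]
  have hμ : u + v ∈ K := add_mem_cone hconv hcone hu hv
  have hα : 0 < pairR w (u + v) := hpos _ hμ huv
  apply mul_ne_zero hc
  intro h
  have := congrArg Complex.re h
  simp at this
  linarith

lemma Phi_ne_zero (hpos : ∀ u ∈ K, u ≠ 0 → 0 < pairR w u)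
    (hconv : Convex ℝ K) (hcone : ∀ c : ℝ, 0 ≤ c → ∀ u ∈ K, c • u ∈ K)
    {c : ℂ} {u v : Fin d → ℝ} (hc : c ≠ 0) (hu : u ∈ K) (hv : v ∈ K)
    (huv : u + v ≠ 0) : Phi c u v ≠ 0 := by
  intro h
  apply pair_Phi_ne_zero hpos hconv hcone hc hu hv huv
  rw [h]; unfold pairC; simp

end Cplx
end Stmt10Aux
end
noncomputable section
namespace Stmt10Aux
variable {d : ℕ}
section Int
variable {K : Set (Fin d → ℝ)}

/-- inverse coordinates: from z and c recover u and v -/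
def g1 (c : ℂ) (z : Fin d → ℂ) : Fin d → ℝ := fun i => ((z i / c).re + (z i / c).im) / 2
def g2 (c : ℂ) (z : Fin d → ℂ) : Fin d → ℝ := fun i => ((z i / c).re - (z i / c).im) / 2

lemma g1_Phi {c : ℂ} (hc : c ≠ 0) (u v : Fin d → ℝ) : g1 c (Phi c u v) = u := by
  funext i
  simp only [g1, Phi]
  rw [mul_div_cancel_left₀ _ hc]
  simp [Complex.add_re, Complex.add_im, Complex.mul_re, Complex.mul_im]

lemma g2_Phi {c : ℂ} (hc : c ≠ 0) (u v : Fin d → ℝ) : g2 c (Phi c u v) = v := by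
  funext i
  simp only [g2, Phi]
  rw [mul_div_cancel_left₀ _ hc]
  simp [Complex.add_re, Complex.add_im, Complex.mul_re, Complex.mul_im]

lemma Phi_g (c : ℂ) (hc : c ≠ 0) (z : Fin d → ℂ) : Phi c (g1 c z) (g2 c z) = z := by
  funext i
  simp only [Phi, g1, g2]
  have key : ((((z i / c).re + (z i / c).im) / 2 : ℝ) : ℂ) + ((((z i / c).re - (z i / c).im) / 2 : ℝ) : ℂ)
      + Complex.I * (((((z i / c).re + (z i / c).im) / 2 : ℝ) : ℂ) - ((((z i / c).re - (z i / c).im) / 2 : ℝ) : ℂ))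
      = z i / c := by
    apply Complex.ext <;>
      simp [Complex.add_re, Complex.add_im, Complex.mul_re, Complex.mul_im] <;> ring
  rw [key, mul_div_cancel₀ _ hc]

lemma continuous_g1 (c : ℂ) : Continuous (g1 (d := d) c) := by
  apply continuous_pi
  intro i
  apply Continuous.div_const
  exact ((Complex.continuous_re.comp ((continuous_apply i : Continuous fun x : Fin d → ℂ => x i).div_const c)).add
    (Complex.continuous_im.comp ((continuous_apply i : Continuous fun x : Fin d → ℂ => x i).div_const c)))

lemma continuous_g2 (c : ℂ) : Continuous (g2 (d := d) c) := by
  apply continuous_pi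
  intro i
  apply Continuous.div_const
  exact ((Complex.continuous_re.comp ((continuous_apply i : Continuous fun x : Fin d → ℂ => x i).div_const c)).sub
    (Complex.continuous_im.comp ((continuous_apply i : Continuous fun x : Fin d → ℂ => x i).div_const c)))

lemma Phi_mem_interior {c : ℂ} (hc : c ≠ 0) {u v : Fin d → ℝ}
    (hu : u ∈ interior K) (hv : v ∈ interior K) :
    Phi c u v ∈ interior (complexify K) := by
  apply mem_interior.2
  refine ⟨g1 c ⁻¹' interior K ∩ g2 c ⁻¹' interior K, ?_, ?_, ?_⟩
  · rintro z ⟨h1, h2⟩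
    have := Phi_mem_complexify (K := K) c (interior_subset h1) (interior_subset h2)
    rwa [Phi_g c hc z] at this
  · exact (isOpen_interior.preimage (continuous_g1 c)).inter
      (isOpen_interior.preimage (continuous_g2 c))
  · constructor
    · show g1 c (Phi c u v) ∈ interior K
      rwa [g1_Phi hc]
    · show g2 c (Phi c u v) ∈ interior K
      rwa [g2_Phi hc]

end Int
end Stmt10Aux
end
noncomputable section
namespace Stmt10Aux
variable {d : ℕ}
section Int2
variable {K : Set (Fin d → ℝ)}

lemma Phi_zero_left (c : ℂ) (v : Fin d → ℝ) :
    Phi c 0 v = Phi (c * (1 - Complex.I) / 2) v v := by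
  funext i
  simp only [Phi, Pi.zero_apply]
  push_cast
  field_simp
  ring_nf

lemma Phi_zero_right (c : ℂ) (u : Fin d → ℝ) :
    Phi c u 0 = Phi (c * (1 + Complex.I) / 2) u u := by
  funext i
  simp only [Phi, Pi.zero_apply]
  push_cast
  field_simp
  ring_nf

lemma Phi_sign (c : ℂ) (ε : ℝ) (hε : ε * ε = 1) (u v : Fin d → ℝ) :
    Phi ((ε : ℂ) * c) (ε • u) (ε • v) = Phi c u v := by
  funext i
  simp only [Phi, Pi.smul_apply, smul_eq_mul]
  push_cast
  have h : ((ε : ℂ)) * ε = 1 := by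
    rw [← Complex.ofReal_mul, hε]; simp
  linear_combination (c * (((u i : ℂ) + (v i : ℂ)) + Complex.I * ((u i : ℂ) - (v i : ℂ)))) * h

lemma Phi_mem_interior' {c : ℂ} (hc : c ≠ 0) {u v : Fin d → ℝ}
    (hu : u ∈ interior K ∨ u = 0) (hv : v ∈ interior K ∨ v = 0)
    (hne : ¬(u = 0 ∧ v = 0)) :
    Phi c u v ∈ interior (complexify K) := by
  rcases hu with hu | rfl
  · rcases hv with hv | rfl
    · exact Phi_mem_interior hc hu hv
    · rw [Phi_zero_right]
      refine Phi_mem_interior ?_ hu hu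
      have : (1 + Complex.I) ≠ 0 := by
        intro h
        have := congrArg Complex.re h
        simp at this
      exact div_ne_zero (mul_ne_zero hc this) two_ne_zero
  · rcases hv with hv | rfl
    · rw [Phi_zero_left]
      refine Phi_mem_interior ?_ hv hv
      have : (1 - Complex.I) ≠ 0 := by
        intro h
        have := congrArg Complex.re h
        simp at this
      exact div_ne_zero (mul_ne_zero hc this) two_ne_zero
    · exact absurd ⟨rfl, rfl⟩ hne

end Int2
end Stmt10Aux
end
noncomputable section
namespace Stmt10Aux
variable {d : ℕ}

lemma pairR_add (w u v : Fin d → ℝ) : pairR w (u + v) = pairR w u + pairR w v := by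
  unfold pairR; rw [← Finset.sum_add_distrib]
  exact Finset.sum_congr rfl fun i _ => by simp [Pi.add_apply]; ring

lemma pairR_smul (w : Fin d → ℝ) (a : ℝ) (u : Fin d → ℝ) :
    pairR w (a • u) = a * pairR w u := by
  unfold pairR; rw [Finset.mul_sum]
  exact Finset.sum_congr rfl fun i _ => by simp [Pi.smul_apply, smul_eq_mul]; ring

lemma pairR_neg (w u : Fin d → ℝ) : pairR w (-u) = -pairR w u := by
  have := pairR_smul w (-1) u
  simpa using this

lemma pairR_zero (w : Fin d → ℝ) : pairR w 0 = 0 := by unfold pairR; simp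

lemma isLinearMap_pairR (w : Fin d → ℝ) : IsLinearMap ℝ (pairR w) :=
  ⟨fun u v => pairR_add w u v, fun a u => pairR_smul w a u⟩

lemma continuous_mulVec (A : Matrix (Fin d) (Fin d) ℝ) :
    Continuous (fun u : Fin d → ℝ => A.mulVec u) := by
  apply continuous_pi
  intro i
  simp only [Matrix.mulVec, dotProduct]
  exact continuous_finset_sum _ fun k _ => (continuous_const.mul (continuous_apply k))

section Sign
variable {m : ℕ} {K : Fin m → Set (Fin d → ℝ)} {w : Fin d → ℝ}

lemma uniform_sign (hw : ∑ i, w i ^ 2 = 1)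
    (hposA : ∀ u ∈ ⋃ j, K j, u ≠ 0 → 0 < ∑ i, u i * w i)
    (hconv : ∀ j, Convex ℝ (K j))
    {A : Matrix (Fin d) (Fin d) ℝ} {j ℓ : Fin m}
    (hmap : ∀ u ∈ K j, u ≠ 0 → A.mulVec u ∈ interior (K ℓ) ∨ -A.mulVec u ∈ interior (K ℓ)) :
    ∃ ε : ℝ, (ε = 1 ∨ ε = -1) ∧ ∀ u ∈ K j, u ≠ 0 → ε • A.mulVec u ∈ interior (K ℓ) := by
  have hpos : ∀ j', ∀ u ∈ K j', u ≠ 0 → 0 < pairR w u := fun j' u hu h0 =>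
    hposA u (Set.mem_iUnion.2 ⟨j', hu⟩) h0
  have h0int : ∀ j', (0 : Fin d → ℝ) ∉ interior (K j') := fun j' =>
    zero_not_mem_interior hw (hpos j')
  set T : Set (Fin d → ℝ) := K j ∩ {u | 0 < pairR w u} with hT
  have hTconv : Convex ℝ T := (hconv j).inter (convex_halfSpace_gt (isLinearMap_pairR w) 0)
  have hTco : IsPreconnected T := hTconv.isPreconnected
  have hTmem : ∀ u, u ∈ T ↔ (u ∈ K j ∧ u ≠ 0) := by
    intro u
    constructor
    · rintro ⟨h1, h2⟩
      refine ⟨h1, ?_⟩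
      rintro rfl
      simp only [Set.mem_setOf_eq, pairR_zero] at h2
      exact lt_irrefl 0 h2
    · rintro ⟨h1, h2⟩
      exact ⟨h1, hpos j u h1 h2⟩
  set s : Set (Fin d → ℝ) := A.mulVec '' T with hs
  have hsco : IsPreconnected s := hTco.image _ (continuous_mulVec A).continuousOn
  set O₁ := interior (K ℓ)
  set O₂ := Neg.neg ⁻¹' interior (K ℓ) with hO₂
  have hdisj : Disjoint O₁ O₂ := by
    rw [Set.disjoint_iff]
    rintro x ⟨h1, h2⟩
    have hx1 : x ∈ K ℓ := interior_subset h1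
    have hx2 : -x ∈ K ℓ := interior_subset h2
    have hxne : x ≠ 0 := by rintro rfl; exact h0int ℓ h1
    have p1 := hpos ℓ x hx1 hxne
    have p2 := hpos ℓ (-x) hx2 (by simpa using hxne)
    have := pairR_neg w x
    unfold pairR at *
    simp only [this] at p2
    linarith [p2]
  have hsub : s ⊆ O₁ ∪ O₂ := by
    rintro x ⟨u, hu, rfl⟩
    obtain ⟨h1, h2⟩ := (hTmem u).1 hu
    rcases hmap u h1 h2 with h | h
    · exact Or.inl h
    · exact Or.inr h
  rcases hsco.subset_or_subset isOpen_interior (isOpen_interior.preimage continuous_neg)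
      hdisj hsub with h | h
  · refine ⟨1, Or.inl rfl, fun u hu h0 => ?_⟩
    rw [one_smul]
    exact h ⟨u, (hTmem u).2 ⟨hu, h0⟩, rfl⟩
  · refine ⟨-1, Or.inr rfl, fun u hu h0 => ?_⟩
    have := h ⟨u, (hTmem u).2 ⟨hu, h0⟩, rfl⟩
    simpa [neg_one_smul] using this
end Sign
end Stmt10Aux
end
noncomputable section
namespace Stmt10Aux
variable {d : ℕ}
section Semi
variable {m : ℕ} {K : Fin m → Set (Fin d → ℝ)} {w : Fin d → ℝ}
    {S : Set (Matrix (Fin d) (Fin d) ℝ)}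

lemma semigroup_sign (hw : ∑ i, w i ^ 2 = 1)
    (hposA : ∀ u ∈ ⋃ j, K j, u ≠ 0 → 0 < ∑ i, u i * w i)
    (hconv : ∀ j, Convex ℝ (K j))
    (hmapS : ∀ A ∈ S, ∀ j, ∃ ℓ, ∀ u ∈ K j, u ≠ 0 →
      A.mulVec u ∈ interior (K ℓ) ∨ -A.mulVec u ∈ interior (K ℓ)) :
    ∀ l : List (Matrix (Fin d) (Fin d) ℝ), l ≠ [] → (∀ M ∈ l, M ∈ S) → ∀ j,
      ∃ ℓ, ∃ ε : ℝ, (ε = 1 ∨ ε = -1) ∧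
        ∀ u ∈ K j, u ≠ 0 → ε • (l.prod.mulVec u) ∈ interior (K ℓ) := by
  have hpos : ∀ j', ∀ u ∈ K j', u ≠ 0 → 0 < pairR w u := fun j' u hu h0 =>
    hposA u (Set.mem_iUnion.2 ⟨j', hu⟩) h0
  have h0int : ∀ j', (0 : Fin d → ℝ) ∉ interior (K j') := fun j' =>
    zero_not_mem_interior hw (hpos j')
  intro l
  induction l with
  | nil => intro h; exact absurd rfl h
  | cons M rest ih =>
    intro _ hmem j
    rcases eq_or_ne rest [] with rfl | hrest
    · obtain ⟨ℓ, hℓ⟩ := hmapS M (hmem M (by simp)) j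
      obtain ⟨ε, hε, h⟩ := uniform_sign hw hposA hconv hℓ
      refine ⟨ℓ, ε, hε, fun u hu h0 => ?_⟩
      simpa [List.prod_cons, List.prod_nil] using h u hu h0
    · obtain ⟨ℓ', ε', hε', h'⟩ := ih hrest (fun M' hM' => hmem M' (List.mem_cons_of_mem _ hM')) j
      obtain ⟨ℓ, hℓ⟩ := hmapS M (hmem M (by simp)) ℓ'
      obtain ⟨ε'', hε'', h''⟩ := uniform_sign hw hposA hconv hℓ
      refine ⟨ℓ, ε'' * ε', by rcases hε' with rfl|rfl <;> rcases hε'' with rfl|rfl <;> norm_num,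
        fun u hu h0 => ?_⟩
      set x := ε' • (rest.prod.mulVec u) with hx
      have hxint : x ∈ interior (K ℓ') := h' u hu h0
      have hxK : x ∈ K ℓ' := interior_subset hxint
      have hxne : x ≠ 0 := by rintro h; rw [h] at hxint; exact h0int ℓ' hxint
      have hMx : ε'' • M.mulVec x ∈ interior (K ℓ) := h'' x hxK hxne
      have heq : ε'' • M.mulVec x = (ε'' * ε') • ((M :: rest).prod.mulVec u) := by
        rw [hx, Matrix.mulVec_smul, smul_smul, List.prod_cons, ← Matrix.mulVec_mulVec]
      rwa [heq] at hMx
end Semi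
end Stmt10Aux
end
noncomputable section
namespace Stmt10Aux
variable {d : ℕ}

lemma mulVecC_apply (A : Matrix (Fin d) (Fin d) ℝ) (z : Fin d → ℂ) (i : Fin d) :
    mulVecC A z i = ∑ k, (A i k : ℂ) * z k := by
  simp [mulVecC, Matrix.mulVec, dotProduct, Matrix.map_apply]

lemma mulVecC_smul (A : Matrix (Fin d) (Fin d) ℝ) (a : ℂ) (z : Fin d → ℂ) :
    mulVecC A (a • z) = a • mulVecC A z := Matrix.mulVec_smul _ _ _

lemma mulVecC_mul (A B : Matrix (Fin d) (Fin d) ℝ) (z : Fin d → ℂ) :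
    mulVecC (A * B) z = mulVecC A (mulVecC B z) := by
  unfold mulVecC
  rw [Matrix.mulVec_mulVec]
  have hmap : (A * B).map (fun x : ℝ => (x : ℂ))
      = (A.map (fun x : ℝ => (x : ℂ))) * (B.map (fun x : ℝ => (x : ℂ))) := by
    funext i k
    simp only [Matrix.map_apply, Matrix.mul_apply]
    push_cast
    rfl
  rw [hmap]

lemma mulVecC_Phi (A : Matrix (Fin d) (Fin d) ℝ) (c : ℂ) (u v : Fin d → ℝ) :
    mulVecC A (Phi c u v) = Phi c (A.mulVec u) (A.mulVec v) := by
  funext i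
  rw [mulVecC_apply]
  simp only [Phi, Matrix.mulVec, dotProduct]
  have h : ∀ k, (A i k : ℂ) * (c * (((u k : ℂ) + (v k : ℂ)) + Complex.I * ((u k : ℂ) - (v k : ℂ))))
      = c * ((((A i k * u k : ℝ) : ℂ) + ((A i k * v k : ℝ) : ℂ))
        + Complex.I * (((A i k * u k : ℝ) : ℂ) - ((A i k * v k : ℝ) : ℂ))) := by
    intro k; push_cast; ring
  rw [Finset.sum_congr rfl (fun k _ => h k)]
  rw [← Finset.mul_sum]
  congr 1
  push_cast
  rw [Finset.sum_add_distrib, Finset.sum_add_distrib, ← Finset.mul_sum, Finset.sum_sub_distrib]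

end Stmt10Aux
end
noncomputable section
namespace Stmt10Aux
variable {d : ℕ}
section Main
variable {m : ℕ} {K : Fin m → Set (Fin d → ℝ)} {w : Fin d → ℝ}
    {S : Set (Matrix (Fin d) (Fin d) ℝ)}

/-- The main one-step mapping lemma for elements of the semigroup acting on
complexified cones. -/
lemma semigroup_maps (hw : ∑ i, w i ^ 2 = 1)
    (hposA : ∀ u ∈ ⋃ j, K j, u ≠ 0 → 0 < ∑ i, u i * w i)
    (hconv : ∀ j, Convex ℝ (K j))
    (hcone : ∀ j, ∀ c : ℝ, 0 ≤ c → ∀ u ∈ K j, c • u ∈ K j)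
    (hmapS : ∀ A ∈ S, ∀ j, ∃ ℓ, ∀ u ∈ K j, u ≠ 0 →
      A.mulVec u ∈ interior (K ℓ) ∨ -A.mulVec u ∈ interior (K ℓ))
    {B : Matrix (Fin d) (Fin d) ℝ} (hB : B ∈ semigroupOf S)
    {j : Fin m} {z : Fin d → ℂ} (hz : z ∈ complexify (K j)) (hzne : z ≠ 0) :
    ∃ ℓ, mulVecC B z ∈ interior (complexify (K ℓ)) ∧ pairC w (mulVecC B z) ≠ 0 := by
  have hpos : ∀ j', ∀ u ∈ K j', u ≠ 0 → 0 < pairR w u := fun j' u hu h0 =>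
    hposA u (Set.mem_iUnion.2 ⟨j', hu⟩) h0
  have h0int : ∀ j', (0 : Fin d → ℝ) ∉ interior (K j') := fun j' =>
    zero_not_mem_interior hw (hpos j')
  obtain ⟨c, u, v, hc, hu, hv, huv, rfl⟩ :=
    rep_of_ne_zero (hpos j) (hconv j) (hcone j) hz hzne
  obtain ⟨l, hlne, hlmem, rfl⟩ := hB
  obtain ⟨ℓ, ε, hε, hmain⟩ := semigroup_sign hw hposA hconv hmapS l hlne hlmem j
  have hε2 : ε * ε = 1 := by rcases hε with rfl | rfl <;> norm_num
  have hεne : (ε : ℂ) ≠ 0 := by rcases hε with rfl | rfl <;> norm_num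
  set B := l.prod with hBdef
  set u' := ε • B.mulVec u with hu'
  set v' := ε • B.mulVec v with hv'
  have hcε : (ε : ℂ) * c ≠ 0 := mul_ne_zero hεne hc
  have heq : mulVecC B (Phi c u v) = Phi ((ε : ℂ) * c) u' v' := by
    rw [mulVecC_Phi, ← Phi_sign c ε hε2 (B.mulVec u) (B.mulVec v)]
  have hu'' : u' ∈ interior (K ℓ) ∨ u' = 0 := by
    rcases eq_or_ne u 0 with rfl | hune
    · right; rw [hu', Matrix.mulVec_zero, smul_zero]
    · exact Or.inl (hmain u hu hune)
  have hv'' : v' ∈ interior (K ℓ) ∨ v' = 0 := by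
    rcases eq_or_ne v 0 with rfl | hvne
    · right; rw [hv', Matrix.mulVec_zero, smul_zero]
    · exact Or.inl (hmain v hv hvne)
  have hOr : u ≠ 0 ∨ v ≠ 0 := by
    by_contra hcc
    push_neg at hcc
    exact huv (by rw [hcc.1, hcc.2, add_zero])
  have hne' : ¬(u' = 0 ∧ v' = 0) := by
    rintro ⟨h1, h2⟩
    rcases hOr with h | h
    · have := hmain u hu h; rw [← hu', h1] at this; exact h0int ℓ this
    · have := hmain v hv h; rw [← hv', h2] at this; exact h0int ℓ this
  have hu'K : u' ∈ K ℓ := by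
    rcases hu'' with h | h
    · exact interior_subset h
    · rcases hOr with h' | h'
      · exact absurd h (by intro hh; have := hmain u hu h'; rw [← hu', hh] at this; exact h0int ℓ this)
      · rw [h]
        have := hmain v hv h'
        exact zero_mem_cone ⟨v', interior_subset this⟩ (hcone ℓ)
  have hv'K : v' ∈ K ℓ := by
    rcases hv'' with h | h
    · exact interior_subset h
    · rw [h]
      have hKne : (K ℓ).Nonempty := ⟨u', hu'K⟩
      exact zero_mem_cone hKne (hcone ℓ)
  have hu'v' : u' + v' ≠ 0 := by
    intro hsum
    obtain ⟨h1, h2⟩ := add_eq_zero_of_cone (hpos ℓ) (hconv ℓ) (hcone ℓ) hu'K hv'K hsum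
    exact hne' ⟨h1, h2⟩
  refine ⟨ℓ, ?_, ?_⟩
  · rw [heq]
    exact Phi_mem_interior' hcε
      (by rcases hu'' with h|h; exacts [Or.inl h, Or.inr h])
      (by rcases hv'' with h|h; exacts [Or.inl h, Or.inr h]) hne'
  · rw [heq]
    exact pair_Phi_ne_zero (hpos ℓ) (hconv ℓ) (hcone ℓ) hcε hu'K hv'K hu'v'
end Main
end Stmt10Aux
end
noncomputable section
namespace Stmt10Aux
variable {d : ℕ}

lemma normalize_smul (w : Fin d → ℝ) {a : ℂ} (ha : a ≠ 0) (x : Fin d → ℂ) :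
    (pairC w (a • x))⁻¹ • (a • x) = (pairC w x)⁻¹ • x := by
  rw [pair_smul, smul_smul, mul_inv_rev, mul_assoc, inv_mul_cancel₀ ha, mul_one]


lemma factor {S : Set (Matrix (Fin d) (Fin d) ℝ)} {B : Matrix (Fin d) (Fin d) ℝ}
    (hB : B ∈ semigroupOf S) :
    ∃ M ∈ S, ∃ C, B = M * C ∧ (C = 1 ∨ C ∈ semigroupOf S) := by
  obtain ⟨l, hlne, hlmem, rfl⟩ := hB
  cases l with
  | nil => exact absurd rfl hlne
  | cons M rest =>
    refine ⟨M, hlmem M (by simp), rest.prod, List.prod_cons, ?_⟩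
    rcases eq_or_ne rest [] with rfl | hr
    · left; simp
    · right; exact ⟨rest, hr, fun M' hM' => hlmem M' (List.mem_cons_of_mem _ hM'), rfl⟩

def Cset (K : Set (Fin d → ℝ)) : Set ((Fin d → ℝ) × (Fin d → ℝ)) :=
  {p | p.1 ∈ K ∧ p.2 ∈ K ∧ ‖p.1‖ ≤ 1 ∧ ‖p.2‖ ≤ 1 ∧ (‖p.1‖ = 1 ∨ ‖p.2‖ = 1)}

lemma isCompact_Cset {K : Set (Fin d → ℝ)} (hK : IsClosed K) : IsCompact (Cset K) := by
  apply IsCompact.of_isClosed_subset (isCompact_closedBall (0 : (Fin d → ℝ) × (Fin d → ℝ)) 1)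
  · have h1 : IsClosed {p : (Fin d → ℝ) × (Fin d → ℝ) | p.1 ∈ K} := hK.preimage continuous_fst
    have h2 : IsClosed {p : (Fin d → ℝ) × (Fin d → ℝ) | p.2 ∈ K} := hK.preimage continuous_snd
    have h3 : IsClosed {p : (Fin d → ℝ) × (Fin d → ℝ) | ‖p.1‖ ≤ 1} :=
      isClosed_Iic.preimage (continuous_norm.comp continuous_fst)
    have h4 : IsClosed {p : (Fin d → ℝ) × (Fin d → ℝ) | ‖p.2‖ ≤ 1} :=
      isClosed_Iic.preimage (continuous_norm.comp continuous_snd)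
    have h5 : IsClosed {p : (Fin d → ℝ) × (Fin d → ℝ) | ‖p.1‖ = 1 ∨ ‖p.2‖ = 1} := by
      have ha : IsClosed {p : (Fin d → ℝ) × (Fin d → ℝ) | ‖p.1‖ = 1} :=
        (isClosed_singleton (x := (1:ℝ))).preimage (continuous_norm.comp continuous_fst)
      have hb : IsClosed {p : (Fin d → ℝ) × (Fin d → ℝ) | ‖p.2‖ = 1} :=
        (isClosed_singleton (x := (1:ℝ))).preimage (continuous_norm.comp continuous_snd)
      exact ha.union hb
    exact (h1.inter (h2.inter (h3.inter (h4.inter h5))))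
  · rintro p ⟨_, _, h3, h4, _⟩
    rw [mem_closedBall_zero_iff]
    rw [Prod.norm_def]
    exact max_le h3 h4

def Xset {m : ℕ} (K : Fin m → Set (Fin d → ℝ)) : Set (Fin d → ℂ) :=
  ⋃ j, (fun p : (Fin d → ℝ) × (Fin d → ℝ) => Phi 1 p.1 p.2) '' Cset (K j)

lemma continuous_Phi1 :
    Continuous (fun p : (Fin d → ℝ) × (Fin d → ℝ) => Phi 1 p.1 p.2) := by
  apply continuous_pi
  intro i
  unfold Phi
  have c1 : Continuous fun p : (Fin d → ℝ) × (Fin d → ℝ) => ((p.1 i : ℂ)) :=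
    Complex.continuous_ofReal.comp ((continuous_apply i).comp continuous_fst)
  have c2 : Continuous fun p : (Fin d → ℝ) × (Fin d → ℝ) => ((p.2 i : ℂ)) :=
    Complex.continuous_ofReal.comp ((continuous_apply i).comp continuous_snd)
  exact continuous_const.mul ((c1.add c2).add (continuous_const.mul (c1.sub c2)))

lemma isCompact_Xset {m : ℕ} {K : Fin m → Set (Fin d → ℝ)}
    (hK : ∀ j, IsClosed (K j)) : IsCompact (Xset K) :=
  isCompact_iUnion fun j => (isCompact_Cset (hK j)).image continuous_Phi1

lemma scale_to_X {K : Set (Fin d → ℝ)} {w : Fin d → ℝ}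
    (hpos : ∀ u ∈ K, u ≠ 0 → 0 < pairR w u)
    (hconv : Convex ℝ K) (hcone : ∀ c : ℝ, 0 ≤ c → ∀ u ∈ K, c • u ∈ K)
    {z : Fin d → ℂ} (hz : z ∈ complexify K) (hzne : z ≠ 0) :
    ∃ p ∈ Cset K, ∃ lam : ℂ, lam ≠ 0 ∧ z = lam • Phi 1 p.1 p.2 := by
  obtain ⟨c, u, v, hc, hu, hv, huv, rfl⟩ := rep_of_ne_zero hpos hconv hcone hz hzne
  have hOr : u ≠ 0 ∨ v ≠ 0 := by
    by_contra hcc; push_neg at hcc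
    exact huv (by rw [hcc.1, hcc.2, add_zero])
  set t : ℝ := max ‖u‖ ‖v‖ with ht
  have htpos : 0 < t := by
    rcases hOr with h | h
    · exact lt_max_of_lt_left (norm_pos_iff.2 h)
    · exact lt_max_of_lt_right (norm_pos_iff.2 h)
  have htinv : (0:ℝ) ≤ t⁻¹ := by positivity
  refine ⟨(t⁻¹ • u, t⁻¹ • v), ⟨hcone t⁻¹ htinv u hu, hcone t⁻¹ htinv v hv, ?_, ?_, ?_⟩,
    c * (t : ℂ), mul_ne_zero hc (by exact_mod_cast htpos.ne'), ?_⟩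
  · rw [norm_smul, Real.norm_eq_abs, abs_of_nonneg htinv]
    rw [inv_mul_le_iff₀ htpos, mul_one]
    exact le_max_left _ _
  · rw [norm_smul, Real.norm_eq_abs, abs_of_nonneg htinv]
    rw [inv_mul_le_iff₀ htpos, mul_one]
    exact le_max_right _ _
  · rcases max_choice ‖u‖ ‖v‖ with h | h
    · left
      rw [norm_smul, Real.norm_eq_abs, abs_of_nonneg htinv]
      have hteq : t = ‖u‖ := by rw [ht]; exact h
      rw [hteq]
      rw [inv_mul_cancel₀]
      rw [← hteq]; exact htpos.ne'
    · right
      rw [norm_smul, Real.norm_eq_abs, abs_of_nonneg htinv]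
      have hteq : t = ‖v‖ := by rw [ht]; exact h
      rw [hteq]
      rw [inv_mul_cancel₀]
      rw [← hteq]; exact htpos.ne'
  · funext i
    simp only [Phi, Pi.smul_apply, smul_eq_mul]
    push_cast
    have htC : (t : ℂ) ≠ 0 := by exact_mod_cast htpos.ne'
    field_simp
end Stmt10Aux
end
noncomputable section
namespace Stmt10Aux
variable {d : ℕ}

lemma Xset_spec {m : ℕ} {K : Fin m → Set (Fin d → ℝ)} {w : Fin d → ℝ}
    (hpos : ∀ j, ∀ u ∈ K j, u ≠ 0 → 0 < pairR w u)
    (hconv : ∀ j, Convex ℝ (K j))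
    (hcone : ∀ j, ∀ c : ℝ, 0 ≤ c → ∀ u ∈ K j, c • u ∈ K j)
    {ζ : Fin d → ℂ} (hζ : ζ ∈ Xset K) : ∃ j, ζ ∈ complexify (K j) ∧ ζ ≠ 0 := by
  obtain ⟨Xj, ⟨j, rfl⟩, p, hp, rfl⟩ := hζ
  obtain ⟨h1, h2, _, _, h5⟩ := hp
  refine ⟨j, Phi_mem_complexify 1 h1 h2, ?_⟩
  have hOr : p.1 ≠ 0 ∨ p.2 ≠ 0 := by
    rcases h5 with h | h
    · left; intro hcc; rw [hcc] at h; simp at h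
    · right; intro hcc; rw [hcc] at h; simp at h
  have hsum : p.1 + p.2 ≠ 0 := by
    intro hs
    obtain ⟨ha, hb⟩ := add_eq_zero_of_cone (hpos j) (hconv j) (hcone j) h1 h2 hs
    rcases hOr with h | h
    · exact h ha
    · exact h hb
  exact Phi_ne_zero (hpos j) (hconv j) (hcone j) one_ne_zero h1 h2 hsum

def Gmap (w : Fin d → ℝ) (p : Matrix (Fin d) (Fin d) ℝ × (Fin d → ℂ)) : Fin d → ℂ :=
  (pairC w (mulVecC p.1 p.2))⁻¹ • mulVecC p.1 p.2

lemma continuous_num :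
    Continuous fun p : Matrix (Fin d) (Fin d) ℝ × (Fin d → ℂ) => mulVecC p.1 p.2 := by
  apply continuous_pi
  intro i
  have heq : (fun p : Matrix (Fin d) (Fin d) ℝ × (Fin d → ℂ) => mulVecC p.1 p.2 i)
      = fun p => ∑ k, ((p.1 i k : ℂ) * p.2 k) := funext fun p => mulVecC_apply _ _ i
  rw [heq]
  apply continuous_finset_sum
  intro k _
  have hA : Continuous fun p : Matrix (Fin d) (Fin d) ℝ × (Fin d → ℂ) => (p.1 i k : ℂ) :=
    Complex.continuous_ofReal.comp
      ((continuous_apply k).comp ((continuous_apply i).comp continuous_fst))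
  exact hA.mul ((continuous_apply k).comp continuous_snd)

lemma continuous_den (w : Fin d → ℝ) :
    Continuous fun p : Matrix (Fin d) (Fin d) ℝ × (Fin d → ℂ) =>
      pairC w (mulVecC p.1 p.2) := by
  unfold pairC
  exact continuous_finset_sum _ fun i _ =>
    ((continuous_apply i).comp continuous_num).mul continuous_const

lemma singleton_mem_semigroup {S : Set (Matrix (Fin d) (Fin d) ℝ)}
    {M : Matrix (Fin d) (Fin d) ℝ} (hM : M ∈ S) : M ∈ semigroupOf S :=
  ⟨[M], by simp, by simpa using hM, by simp⟩

end Stmt10Aux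
end


open Stmt10Aux in
/-- Theorem 3.1(viii): the union of the images Ā(Ω) over the generated semigroup is
compactly contained in Ω (relative to the hyperplane ⟨z,w⟩ = 1). -/
theorem stmt10 {d m : ℕ} (hd : 1 ≤ d) (hm : 0 < m)
    (S : Set (Matrix (Fin d) (Fin d) ℝ)) (hSne : S.Nonempty) (hScpt : IsCompact S)
    (K : Fin m → Set (Fin d → ℝ)) (w : Fin d → ℝ) (hK : IsMulticone S K w)
    (Ω : Set (Fin d → ℂ))
    (hΩ : Ω = {z : Fin d → ℂ | (∃ j, z ∈ interior (complexify (K j))) ∧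
      ∑ i, z i * (w i : ℂ) = 1})
    (U : Set (Fin d → ℂ))
    (hU : U = {z' : Fin d → ℂ | ∃ A ∈ semigroupOf S, ∃ z ∈ Ω,
      z' = (∑ i, mulVecC A z i * (w i : ℂ))⁻¹ • mulVecC A z}) :
    IsCompact (closure U) ∧
    ∀ z ∈ closure U, (∑ i, z i * (w i : ℂ) = 1) ∧
      ∃ V : Set (Fin d → ℂ), IsOpen V ∧ z ∈ V ∧
        V ∩ {z' : Fin d → ℂ | ∑ i, z' i * (w i : ℂ) = 1} ⊆ Ω := by
  obtain ⟨hclosed, hconv, hint, hcone, hw, hposA, hmapS, _⟩ := hK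
  have hpos : ∀ j, ∀ u ∈ K j, u ≠ 0 → 0 < pairR w u := fun j u hu h0 =>
    hposA u (Set.mem_iUnion.2 ⟨j, hu⟩) h0
  -- The compact parameter domain
  set D : Set (Matrix (Fin d) (Fin d) ℝ × (Fin d → ℂ)) := S ×ˢ Xset K with hD
  have hDcpt : IsCompact D := hScpt.prod (isCompact_Xset hclosed)
  -- denominators do not vanish on D
  have hden : ∀ p ∈ D, pairC w (mulVecC p.1 p.2) ≠ 0 := by
    rintro ⟨M, ζ⟩ ⟨hM, hζ⟩
    obtain ⟨j, hζc, hζne⟩ := Xset_spec hpos hconv hcone hζ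
    obtain ⟨ℓ, _, hq⟩ := semigroup_maps hw hposA hconv hcone hmapS
      (singleton_mem_semigroup hM) hζc hζne
    exact hq
  -- the compact image
  set Y : Set (Fin d → ℂ) := Gmap w '' D with hY
  have hYcpt : IsCompact Y := by
    apply hDcpt.image_of_continuousOn
    exact (((continuous_den w).continuousOn.inv₀ hden).smul continuous_num.continuousOn)
  -- Y ⊆ Ω
  have hYΩ : Y ⊆ Ω := by
    rintro z ⟨⟨M, ζ⟩, ⟨hM, hζ⟩, rfl⟩
    obtain ⟨j, hζc, hζne⟩ := Xset_spec hpos hconv hcone hζ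
    obtain ⟨ℓ, hintm, hq⟩ := semigroup_maps hw hposA hconv hcone hmapS
      (singleton_mem_semigroup hM) hζc hζne
    rw [hΩ]
    refine ⟨⟨ℓ, smul_mem_interior_complexify (inv_ne_zero hq) hintm⟩, ?_⟩
    show pairC w (Gmap w (M, ζ)) = 1
    unfold Gmap
    rw [pair_smul, inv_mul_cancel₀ hq]
  -- U ⊆ Y
  have hUY : U ⊆ Y := by
    intro z' hz'
    rw [hU] at hz'
    obtain ⟨A, hA, z, hzΩ, rfl⟩ := hz'
    rw [hΩ] at hzΩ
    obtain ⟨⟨j, hjz⟩, hzpair⟩ := hzΩ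
    have hzpair' : pairC w z = 1 := hzpair
    have hzne : z ≠ 0 := by
      intro h
      rw [h] at hzpair'
      unfold pairC at hzpair'
      simp at hzpair'
    obtain ⟨M, hM, C, rfl, hC⟩ := factor hA
    -- produce the intermediate point z₁ ∈ Ω and the reduction to a single matrix
    have key : ∃ z₁ j₁, z₁ ∈ interior (complexify (K j₁)) ∧ pairC w z₁ = 1 ∧
        (pairC w (mulVecC (M * C) z))⁻¹ • mulVecC (M * C) z
          = (pairC w (mulVecC M z₁))⁻¹ • mulVecC M z₁ := by
      rcases hC with rfl | hC
      · exact ⟨z, j, hjz, hzpair', by rw [mul_one]⟩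
      · obtain ⟨ℓ₁, hint₁, hq₁⟩ := semigroup_maps hw hposA hconv hcone hmapS hC
          (interior_subset hjz) hzne
        set q₁ := pairC w (mulVecC C z) with hq₁def
        refine ⟨q₁⁻¹ • mulVecC C z, ℓ₁,
          smul_mem_interior_complexify (inv_ne_zero hq₁) hint₁, ?_, ?_⟩
        · rw [pair_smul, inv_mul_cancel₀ hq₁]
        · rw [mulVecC_smul, normalize_smul w (inv_ne_zero hq₁), mulVecC_mul]
    obtain ⟨z₁, j₁, hz₁int, hz₁pair, heq⟩ := key
    have hz₁ne : z₁ ≠ 0 := by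
      intro h
      rw [h] at hz₁pair
      unfold pairC at hz₁pair
      simp at hz₁pair
    obtain ⟨p, hp, lam, hlam, hz₁eq⟩ := scale_to_X (hpos j₁) (hconv j₁) (hcone j₁)
      (interior_subset hz₁int) hz₁ne
    refine ⟨(M, Phi 1 p.1 p.2), ⟨hM, Set.mem_iUnion.2 ⟨j₁, ⟨p, hp, rfl⟩⟩⟩, ?_⟩
    symm
    show (pairC w (mulVecC (M * C) z))⁻¹ • mulVecC (M * C) z = Gmap w (M, Phi 1 p.1 p.2)
    rw [heq, hz₁eq, mulVecC_smul, normalize_smul w hlam]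
    rfl
  -- assemble
  have hclU : closure U ⊆ Y := closure_minimal hUY hYcpt.isClosed
  constructor
  · exact hYcpt.of_isClosed_subset isClosed_closure hclU
  · intro z hz
    have hzΩ : z ∈ Ω := hYΩ (hclU hz)
    rw [hΩ] at hzΩ
    obtain ⟨⟨j, hj⟩, hp⟩ := hzΩ
    refine ⟨hp, ⋃ ℓ, interior (complexify (K ℓ)), isOpen_iUnion fun _ => isOpen_interior,
      Set.mem_iUnion.2 ⟨j, hj⟩, ?_⟩
    rintro y ⟨hyV, hyH⟩
    rw [hΩ]
    exact ⟨Set.mem_iUnion.1 hyV, hyH⟩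
end
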